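/- arXiv:1307.2429 — 4 statements merged into one kernel-verified Lean document; each statement's English description precedes it below -/
import Mathlib

section
/- Let ν₁ > 0 and for each ν ≥ ν₁ let M_ν be a bounded linear operator on L²_ν(ℝ;H) such that limsup_{ν→∞} ‖M_ν‖_{L(L²_ν)} < ∞. Let D be a linear subspace consisting of measurable functions f : ℝ → H that belong to L²_ν(ℝ;H) for every ν ≥ ν₁, such that: (a) for every a ∈ ℝ and every ν ≥ ν₁ the set {f ∈ D : 𝟙_{≤a} f ∈ D} is dense in L²_ν(ℝ;H); (b) for all f ∈ D and all ν, ν' ≥ ν₁, the functions M_ν f and M_{ν'} f coincide almost everywhere. Then for every ν ≥ ν₁ the operator M_ν is causal on L²_ν(ℝ;H), i.e., for every a ∈ ℝ and f ∈ L²_ν(ℝ;H) with 𝟙_{≤a} f = 0 one has 𝟙_{≤a}(M_ν f) = 0. -/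
open MeasureTheory Filter
open scoped ENNReal NNReal

/-- The exponentially weighted measure `exp(-2νt) dt` on `ℝ`. -/
noncomputable def wMeasure (ν : ℝ) : Measure ℝ :=
  volume.withDensity fun t => ENNReal.ofReal (Real.exp (-2 * ν * t))

/-- Multiplication by the indicator function of `(-∞, a]` on `L²_ν(ℝ; H)`. -/
noncomputable def trunc {H : Type*} [NormedAddCommGroup H] (ν a : ℝ)
    (f : Lp H 2 (wMeasure ν)) : Lp H 2 (wMeasure ν) :=
  MemLp.toLp (Set.indicator (Set.Iic a) f) ((Lp.memLp f).indicator measurableSet_Iic)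

section Aux

lemma wDensity_measurable (ν : ℝ) :
    Measurable fun t : ℝ => ENNReal.ofReal (Real.exp (-2 * ν * t)) :=
  (Real.measurable_exp.comp ((measurable_const.mul measurable_id))).ennreal_ofReal

lemma lintegral_wMeasure (ν : ℝ) (g : ℝ → ℝ≥0∞) :
    ∫⁻ t, g t ∂(wMeasure ν) = ∫⁻ t, ENNReal.ofReal (Real.exp (-2 * ν * t)) * g t := by
  rw [wMeasure, lintegral_withDensity_eq_lintegral_mul_non_measurable _ (wDensity_measurable ν)
    (Eventually.of_forall fun x => ENNReal.ofReal_lt_top)]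
  rfl

lemma wMeasure_ac (ν : ℝ) : wMeasure ν ≪ volume :=
  withDensity_absolutelyContinuous _ _

lemma volume_ac (ν : ℝ) : (volume : Measure ℝ) ≪ wMeasure ν :=
  withDensity_absolutelyContinuous' (wDensity_measurable ν).aemeasurable
    (Eventually.of_forall fun x => by
      simp [ENNReal.ofReal_eq_zero, not_le, Real.exp_pos])

variable {H : Type*} [NormedAddCommGroup H] {ν a : ℝ}

lemma trunc_coeFn (f : Lp H 2 (wMeasure ν)) :
    ⇑(trunc ν a f) =ᵐ[wMeasure ν] Set.indicator (Set.Iic a) ⇑f :=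
  MemLp.coeFn_toLp _

lemma trunc_eq_zero {f : Lp H 2 (wMeasure ν)}
    (h : Set.indicator (Set.Iic a) ⇑f =ᵐ[wMeasure ν] (0 : ℝ → H)) : trunc ν a f = 0 := by
  rw [trunc, ← MemLp.toLp_zero (MemLp.zero (ε := H) (p := 2) (μ := wMeasure ν))]
  exact MemLp.toLp_congr _ _ h

lemma trunc_zero : trunc ν a (0 : Lp H 2 (wMeasure ν)) = 0 := by
  apply trunc_eq_zero
  filter_upwards [Lp.coeFn_zero H 2 (wMeasure ν)] with t ht
  simp only [Set.indicator_apply]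
  split <;> simp_all

lemma trunc_sub (f g : Lp H 2 (wMeasure ν)) :
    trunc ν a (f - g) = trunc ν a f - trunc ν a g := by
  rw [trunc, trunc, trunc, ← MemLp.toLp_sub]
  apply MemLp.toLp_congr
  filter_upwards [Lp.coeFn_sub f g] with t ht
  by_cases hta : t ∈ Set.Iic a
  · simp only [Set.indicator_of_mem hta, Pi.sub_apply]
    exact ht
  · simp [Set.indicator_of_notMem hta]

lemma norm_trunc_le (f : Lp H 2 (wMeasure ν)) : ‖trunc ν a f‖ ≤ ‖f‖ := by
  rw [Lp.norm_def, Lp.norm_def]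
  apply ENNReal.toReal_mono (Lp.eLpNorm_ne_top f)
  rw [eLpNorm_congr_ae (trunc_coeFn f)]
  exact eLpNorm_indicator_le _

lemma continuous_trunc : Continuous (trunc (H := H) ν a) := by
  have : LipschitzWith 1 (trunc (H := H) ν a) := by
    apply LipschitzWith.of_dist_le_mul
    intro f g
    rw [dist_eq_norm, dist_eq_norm, ← trunc_sub, NNReal.coe_one, one_mul]
    exact norm_trunc_le _
  exact this.continuous

lemma pow_two_eLpNorm {α : Type*} {m : MeasurableSpace α} (μ : Measure α) (f : α → H) :
    ∫⁻ t, (‖f t‖₊ : ℝ≥0∞) ^ (2 : ℝ) ∂μ = eLpNorm f 2 μ ^ (2 : ℝ) := by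
  have h := eLpNorm_nnreal_pow_eq_lintegral (μ := μ) (f := f) (p := (2 : ℝ≥0)) (by norm_num)
  norm_num at h ⊢
  simp only [enorm_eq_nnnorm] at h
  rw [← h]

lemma coe_nnnorm_Lp {p : ℝ≥0∞} {μ : Measure ℝ} [Fact (1 ≤ p)] (f : Lp H p μ) :
    (‖f‖₊ : ℝ≥0∞) = eLpNorm (⇑f) p μ := by
  rw [Lp.nnnorm_def, ENNReal.coe_toNNReal (Lp.eLpNorm_ne_top f)]

end Aux

set_option maxHeartbeats 2000000 in
lemma key {H : Type*} [NormedAddCommGroup H] [InnerProductSpace ℂ H] [CompleteSpace H]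
    (ν₁ : ℝ) (hν₁ : 0 < ν₁)
    (M : (ν : ℝ) → Lp H 2 (wMeasure ν) →L[ℂ] Lp H 2 (wMeasure ν))
    (hbdd : Filter.limsup (fun ν : ℝ => (‖M ν‖₊ : ℝ≥0∞)) Filter.atTop < ⊤)
    (D : Submodule ℂ (ℝ → H))
    (hD : ∀ f ∈ D, ∀ ν : ℝ, ν₁ ≤ ν → MemLp f 2 (wMeasure ν))
    (hcoh : ∀ (f : ℝ → H) (hf : f ∈ D) (ν ν' : ℝ) (hν : ν₁ ≤ ν) (hν' : ν₁ ≤ ν'),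
      ⇑(M ν (MemLp.toLp f (hD f hf ν hν))) =ᵐ[volume]
        ⇑(M ν' (MemLp.toLp f (hD f hf ν' hν'))))
    (ν : ℝ) (hν : ν₁ ≤ ν) (a : ℝ) (h : ℝ → H) (hh : h ∈ D)
    (hsupp : ∀ t, t ≤ a → h t = 0) :
    trunc ν a (M ν (MemLp.toLp h (hD h hh ν hν))) = 0 := by
  set u := M ν (MemLp.toLp h (hD h hh ν hν)) with hu
  set C : ℝ≥0∞ := Filter.limsup (fun ν : ℝ => (‖M ν‖₊ : ℝ≥0∞)) Filter.atTop + 1 with hCdef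
  have hCne : C ≠ ⊤ := ENNReal.add_ne_top.mpr ⟨hbdd.ne, ENNReal.one_ne_top⟩
  have hevC : ∀ᶠ ν' in (atTop : Filter ℝ), (‖M ν'‖₊ : ℝ≥0∞) ≤ C :=
    (eventually_lt_of_limsup_lt (ENNReal.lt_add_right hbdd.ne one_ne_zero)).mono
      fun _ hlt => hlt.le
  set K : ℝ≥0∞ := eLpNorm h 2 (wMeasure ν) ^ (2 : ℝ) with hKdef
  have hKne : K ≠ ⊤ :=
    (ENNReal.rpow_lt_top_of_nonneg (by norm_num) (hD h hh ν hν).2.ne).ne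
  have main : ∀ b : ℝ, b < a →
      ∫⁻ t in Set.Iic b, (‖u t‖₊ : ℝ≥0∞) ^ (2 : ℝ) ∂volume = 0 := by
    intro b hb
    set I := ∫⁻ t in Set.Iic b, (‖u t‖₊ : ℝ≥0∞) ^ (2 : ℝ) ∂volume with hI
    have hbound : ∀ᶠ ν' in (atTop : Filter ℝ),
        I ≤ C ^ (2 : ℝ) * K * ENNReal.ofReal (Real.exp (2*ν*a + 2*ν'*(b-a))) := by
      filter_upwards [hevC, eventually_ge_atTop ν₁, eventually_ge_atTop ν]
        with ν' hC' hν'₁ hνν'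
      have hν'pos : 0 < ν' := lt_of_lt_of_le hν₁ hν'₁
      set v := M ν' (MemLp.toLp h (hD h hh ν' hν'₁)) with hv
      have e1 : I = ∫⁻ t in Set.Iic b, (‖v t‖₊ : ℝ≥0∞) ^ (2 : ℝ) ∂volume := by
        apply lintegral_congr_ae
        filter_upwards [ae_restrict_of_ae (hcoh h hh ν ν' hν hν'₁)] with t ht
        rw [hu, hv, ht]
      have e2 : ∫⁻ t in Set.Iic b, (‖v t‖₊ : ℝ≥0∞) ^ (2 : ℝ) ∂volume ≤
          ENNReal.ofReal (Real.exp (2*ν'*b)) *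
            ∫⁻ t, ENNReal.ofReal (Real.exp (-2*ν'*t)) * (‖v t‖₊ : ℝ≥0∞) ^ (2 : ℝ) ∂volume := by
        calc ∫⁻ t in Set.Iic b, (‖v t‖₊ : ℝ≥0∞) ^ (2 : ℝ) ∂volume
            ≤ ∫⁻ t in Set.Iic b, ENNReal.ofReal (Real.exp (2*ν'*b)) *
                (ENNReal.ofReal (Real.exp (-2*ν'*t)) * (‖v t‖₊ : ℝ≥0∞) ^ (2 : ℝ)) ∂volume := by
              apply lintegral_mono_ae
              rw [ae_restrict_iff' measurableSet_Iic]
              apply Eventually.of_forall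
              intro t ht
              rw [← mul_assoc, ← ENNReal.ofReal_mul (Real.exp_pos _).le, ← Real.exp_add]
              apply le_mul_of_one_le_left zero_le
              rw [show (1 : ℝ≥0∞) = ENNReal.ofReal 1 by simp]
              apply ENNReal.ofReal_le_ofReal
              apply Real.one_le_exp
              have : t ≤ b := ht
              nlinarith
          _ = ENNReal.ofReal (Real.exp (2*ν'*b)) *
              ∫⁻ t in Set.Iic b, ENNReal.ofReal (Real.exp (-2*ν'*t)) *
                (‖v t‖₊ : ℝ≥0∞) ^ (2 : ℝ) ∂volume :=
            lintegral_const_mul' _ _ ENNReal.ofReal_ne_top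
          _ ≤ _ := by
              gcongr
              exact Measure.restrict_le_self
      have e3 : ∫⁻ t, ENNReal.ofReal (Real.exp (-2*ν'*t)) * (‖v t‖₊ : ℝ≥0∞) ^ (2 : ℝ) ∂volume
          = (‖v‖₊ : ℝ≥0∞) ^ (2 : ℝ) := by
        rw [← lintegral_wMeasure, pow_two_eLpNorm, ← coe_nnnorm_Lp]
      have e4 : (‖v‖₊ : ℝ≥0∞) ≤ C * eLpNorm h 2 (wMeasure ν') := by
        calc (‖v‖₊ : ℝ≥0∞)
            ≤ ((‖M ν'‖₊ * ‖MemLp.toLp h (hD h hh ν' hν'₁)‖₊ : ℝ≥0) : ℝ≥0∞) := by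
              exact_mod_cast (M ν').le_opNNNorm _
          _ = (‖M ν'‖₊ : ℝ≥0∞) * (‖MemLp.toLp h (hD h hh ν' hν'₁)‖₊ : ℝ≥0∞) :=
              by rw [ENNReal.coe_mul]
          _ ≤ C * eLpNorm h 2 (wMeasure ν') := by
              apply mul_le_mul' hC'
              rw [coe_nnnorm_Lp, eLpNorm_congr_ae (MemLp.coeFn_toLp _)]
      have e5 : eLpNorm h 2 (wMeasure ν') ^ (2 : ℝ) ≤
          ENNReal.ofReal (Real.exp (2*(ν-ν')*a)) * K := by
        rw [← pow_two_eLpNorm, lintegral_wMeasure]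
        have hpt : ∀ t : ℝ, ENNReal.ofReal (Real.exp (-2*ν'*t)) * (‖h t‖₊ : ℝ≥0∞) ^ (2 : ℝ)
            ≤ ENNReal.ofReal (Real.exp (2*(ν-ν')*a)) *
              (ENNReal.ofReal (Real.exp (-2*ν*t)) * (‖h t‖₊ : ℝ≥0∞) ^ (2 : ℝ)) := by
          intro t
          rcases le_or_gt t a with hta | hta
          · simp [hsupp t hta, ENNReal.zero_rpow_of_pos, (by norm_num : (0:ℝ) < 2)]
          · rw [← mul_assoc, ← ENNReal.ofReal_mul (Real.exp_pos _).le, ← Real.exp_add]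
            apply mul_le_mul_left
            apply ENNReal.ofReal_le_ofReal
            apply Real.exp_le_exp.mpr
            nlinarith
        calc ∫⁻ t, ENNReal.ofReal (Real.exp (-2*ν'*t)) * (‖h t‖₊ : ℝ≥0∞) ^ (2 : ℝ) ∂volume
            ≤ ∫⁻ t, ENNReal.ofReal (Real.exp (2*(ν-ν')*a)) *
                (ENNReal.ofReal (Real.exp (-2*ν*t)) * (‖h t‖₊ : ℝ≥0∞) ^ (2 : ℝ)) ∂volume :=
              lintegral_mono hpt
          _ = ENNReal.ofReal (Real.exp (2*(ν-ν')*a)) *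
              ∫⁻ t, ENNReal.ofReal (Real.exp (-2*ν*t)) * (‖h t‖₊ : ℝ≥0∞) ^ (2 : ℝ) ∂volume :=
            lintegral_const_mul' _ _ ENNReal.ofReal_ne_top
          _ = ENNReal.ofReal (Real.exp (2*(ν-ν')*a)) * K := by
              rw [← lintegral_wMeasure, pow_two_eLpNorm, hKdef]
      calc I = ∫⁻ t in Set.Iic b, (‖v t‖₊ : ℝ≥0∞) ^ (2 : ℝ) ∂volume := e1
        _ ≤ ENNReal.ofReal (Real.exp (2*ν'*b)) *
            ∫⁻ t, ENNReal.ofReal (Real.exp (-2*ν'*t)) * (‖v t‖₊ : ℝ≥0∞) ^ (2 : ℝ) ∂volume := e2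
        _ = ENNReal.ofReal (Real.exp (2*ν'*b)) * (‖v‖₊ : ℝ≥0∞) ^ (2 : ℝ) := by rw [e3]
        _ ≤ ENNReal.ofReal (Real.exp (2*ν'*b)) *
            (C * eLpNorm h 2 (wMeasure ν')) ^ (2 : ℝ) := by
            apply mul_le_mul_right
            exact ENNReal.rpow_le_rpow e4 (by norm_num)
        _ = ENNReal.ofReal (Real.exp (2*ν'*b)) *
            (C ^ (2 : ℝ) * eLpNorm h 2 (wMeasure ν') ^ (2 : ℝ)) := by
            rw [ENNReal.mul_rpow_of_nonneg _ _ (by norm_num : (0:ℝ) ≤ 2)]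
        _ ≤ ENNReal.ofReal (Real.exp (2*ν'*b)) *
            (C ^ (2 : ℝ) * (ENNReal.ofReal (Real.exp (2*(ν-ν')*a)) * K)) := by
            apply mul_le_mul_right
            exact mul_le_mul_right e5 _
        _ = C ^ (2 : ℝ) * K * ENNReal.ofReal (Real.exp (2*ν*a + 2*ν'*(b-a))) := by
            rw [show 2*ν*a + 2*ν'*(b-a) = 2*ν'*b + 2*(ν-ν')*a by ring, Real.exp_add,
              ENNReal.ofReal_mul (Real.exp_pos _).le]
            ring
    have htend : Tendsto
        (fun ν' : ℝ => C ^ (2 : ℝ) * K * ENNReal.ofReal (Real.exp (2*ν*a + 2*ν'*(b-a))))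
        atTop (nhds 0) := by
      have h1 : Tendsto (fun ν' : ℝ => 2*ν*a + 2*ν'*(b-a)) atTop atBot := by
        apply tendsto_atBot_add_const_left
        have heq : (fun ν' : ℝ => 2*ν'*(b-a)) = fun x : ℝ => x * (2*(b-a)) := by
          funext x; ring
        rw [heq]
        exact (tendsto_mul_const_atBot_of_neg (by linarith)).mpr tendsto_id
      have h2 := Real.tendsto_exp_atBot.comp h1
      have h3 : Tendsto (fun ν' : ℝ => ENNReal.ofReal (Real.exp (2*ν*a + 2*ν'*(b-a))))
          atTop (nhds 0) := by
        have := (ENNReal.tendsto_ofReal (a := 0) h2)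
        simpa using this
      have h4 := ENNReal.Tendsto.const_mul (a := C ^ (2:ℝ) * K) h3
        (Or.inr (ENNReal.mul_ne_top (ENNReal.rpow_ne_top_of_nonneg (by norm_num) hCne) hKne))
      simpa using h4
    have : I ≤ 0 := ge_of_tendsto htend hbound
    exact le_antisymm this zero_le
  -- conclude
  have humeas : AEMeasurable (fun t => (‖u t‖₊ : ℝ≥0∞) ^ (2 : ℝ))
      (volume.restrict (Set.Iio a)) :=
    ((((Lp.aestronglyMeasurable u).mono_ac (volume_ac ν)).enorm).pow
      aemeasurable_const).restrict
  have hIio : ∫⁻ t in Set.Iio a, (‖u t‖₊ : ℝ≥0∞) ^ (2 : ℝ) ∂volume = 0 := by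
    have hcover : Set.Iio a = ⋃ n : ℕ, Set.Iic (a - 1/(n+1)) := by
      ext t
      simp only [Set.mem_Iio, Set.mem_iUnion, Set.mem_Iic]
      constructor
      · intro ht
        obtain ⟨n, hn⟩ := exists_nat_one_div_lt (by linarith : (0:ℝ) < a - t)
        exact ⟨n, by push_cast at hn ⊢; linarith⟩
      · rintro ⟨n, hn⟩
        have hp : 0 < 1/((n:ℝ)+1) := by positivity
        linarith
    rw [hcover]
    refine le_antisymm (le_trans (lintegral_iUnion_le _ _) ?_) zero_le
    have hz : ∀ n : ℕ,
        ∫⁻ t in Set.Iic (a - 1/((n:ℝ)+1)), (‖u t‖₊ : ℝ≥0∞) ^ (2 : ℝ) ∂volume = 0 := by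
      intro n
      apply main
      have hp : 0 < 1/((n:ℝ)+1) := by positivity
      linarith
    refine le_of_eq (ENNReal.tsum_eq_zero.mpr fun n => ?_)
    simpa using hz n
  have hae : ∀ᵐ t ∂(volume.restrict (Set.Iio a)), (‖u t‖₊ : ℝ≥0∞) ^ (2 : ℝ) = 0 :=
    (lintegral_eq_zero_iff' humeas).mp hIio
  have hae2 : ∀ᵐ t ∂(volume : Measure ℝ), t ∈ Set.Iio a → u t = 0 := by
    apply ae_imp_of_ae_restrict
    filter_upwards [hae] with t ht
    rcases ENNReal.rpow_eq_zero_iff.mp ht with ⟨hx0, _⟩ | ⟨hxt, _⟩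
    · simpa using hx0
    · exact absurd hxt (by simp)
  have hsing : ∀ᵐ t ∂(volume : Measure ℝ), t ≠ a := by
    have hset : ({x | ¬ x ≠ a} : Set ℝ) = {a} := by ext x; simp
    rw [ae_iff, hset]
    exact measure_singleton a
  have hind : Set.indicator (Set.Iic a) ⇑u =ᵐ[volume] (0 : ℝ → H) := by
    filter_upwards [hae2, hsing] with t h1 h2
    by_cases hta : t ∈ Set.Iic a
    · rw [Set.indicator_of_mem hta]
      simpa using h1 (lt_of_le_of_ne hta h2)
    · rw [Set.indicator_of_notMem hta]
      simp
  exact trunc_eq_zero (hind.filter_mono (wMeasure_ac ν).ae_le)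

/-- A bounded evolutionary mapping, i.e. a family of bounded operators
`M_ν` on `L²_ν(ℝ;H)` with uniformly bounded norms that agree on a common dense domain `D`
whose truncated elements are dense, is causal on every `L²_ν(ℝ;H)`, `ν ≥ ν₁`. -/
theorem stmt1
    {H : Type*} [NormedAddCommGroup H] [InnerProductSpace ℂ H] [CompleteSpace H]
    (ν₁ : ℝ) (hν₁ : 0 < ν₁)
    (M : (ν : ℝ) → Lp H 2 (wMeasure ν) →L[ℂ] Lp H 2 (wMeasure ν))
    (hbdd : Filter.limsup (fun ν : ℝ => (‖M ν‖₊ : ℝ≥0∞)) Filter.atTop < ⊤)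
    (D : Submodule ℂ (ℝ → H))
    (hD : ∀ f ∈ D, ∀ ν : ℝ, ν₁ ≤ ν → MemLp f 2 (wMeasure ν))
    (hdense : ∀ (a : ℝ) (ν : ℝ) (hν : ν₁ ≤ ν),
      Dense {g : Lp H 2 (wMeasure ν) | ∃ (f : ℝ → H) (hf : f ∈ D),
        Set.indicator (Set.Iic a) f ∈ D ∧ g = MemLp.toLp f (hD f hf ν hν)})
    (hcoh : ∀ (f : ℝ → H) (hf : f ∈ D) (ν ν' : ℝ) (hν : ν₁ ≤ ν) (hν' : ν₁ ≤ ν'),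
      ⇑(M ν (MemLp.toLp f (hD f hf ν hν))) =ᵐ[volume]
        ⇑(M ν' (MemLp.toLp f (hD f hf ν' hν')))) :
    ∀ (ν : ℝ), ν₁ ≤ ν → ∀ (a : ℝ) (f : Lp H 2 (wMeasure ν)),
      trunc ν a f = 0 → trunc ν a (M ν f) = 0 := by
  intro ν hν a f hf0
  have hFG : (fun g : Lp H 2 (wMeasure ν) => trunc ν a (M ν g)) =
      fun g => trunc ν a (M ν (trunc ν a g)) := by
    apply Continuous.ext_on (hdense a ν hν)
    · exact continuous_trunc.comp (M ν).continuous
    · exact continuous_trunc.comp ((M ν).continuous.comp continuous_trunc)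
    rintro g ⟨f', hf', hind, rfl⟩
    have htr : trunc ν a (MemLp.toLp f' (hD f' hf' ν hν))
        = MemLp.toLp (Set.indicator (Set.Iic a) f') (hD _ hind ν hν) := by
      apply MemLp.toLp_congr
      filter_upwards [MemLp.coeFn_toLp (hD f' hf' ν hν)] with t ht
      by_cases hta : t ∈ Set.Iic a
      · rw [Set.indicator_of_mem hta, Set.indicator_of_mem hta, ht]
      · rw [Set.indicator_of_notMem hta, Set.indicator_of_notMem hta]
    have hhD : f' - Set.indicator (Set.Iic a) f' ∈ D := D.sub_mem hf' hind
    have hzero := key ν₁ hν₁ M hbdd D hD hcoh ν hν a _ hhD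
      (fun t ht => by simp [Set.indicator_of_mem (Set.mem_Iic.mpr ht)])
    have hsplit : MemLp.toLp f' (hD f' hf' ν hν)
          - MemLp.toLp (Set.indicator (Set.Iic a) f') (hD _ hind ν hν)
        = MemLp.toLp (f' - Set.indicator (Set.Iic a) f') (hD _ hhD ν hν) := by
      rw [← MemLp.toLp_sub (hD f' hf' ν hν) (hD _ hind ν hν)]
    have : trunc ν a (M ν (MemLp.toLp f' (hD f' hf' ν hν)))
        - trunc ν a (M ν (trunc ν a (MemLp.toLp f' (hD f' hf' ν hν)))) = 0 := by
      rw [htr, ← trunc_sub, ← map_sub, hsplit, hzero]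
    have := sub_eq_zero.mp this
    exact this
  have h1 : trunc ν a (M ν f) = trunc ν a (M ν (trunc ν a f)) := congrFun hFG f
  rw [h1, hf0, map_zero, trunc_zero]
end

section
/- Let (P_a)_{a∈ℝ} be a family of self-adjoint idempotent bounded linear operators on K with P_a x → x as a → ∞ for every x ∈ K, and assume 𝓜 and 𝓝 are causal with respect to this family, i.e., P_a 𝓜 u = P_a 𝓜 (P_a u) and P_a 𝓝 u = P_a 𝓝 (P_a u) for all a ∈ ℝ, u ∈ K. Assume there is c > 0 such that: (i) Re⟨B₀φ, P_aφ⟩ ≥ c‖P_aφ‖² for all a ∈ ℝ and all φ ∈ dom(D₀) ∩ dom(A); (ii) Re⟨𝓜*(D₀*ψ) + 𝓝*ψ + A*ψ, ψ⟩ ≥ c‖ψ‖² for all ψ ∈ dom(D₀*) ∩ dom(A*). Then B₀ is closable, its closure B maps dom(B) bijectively onto K with ‖B⁻¹f‖ ≤ (1/c)‖f‖ for all f ∈ K, and B⁻¹ is causal with respect to (P_a): for every a ∈ ℝ and f ∈ K with P_a f = 0 one has P_a(B⁻¹ f) = 0. -/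
open Filter
set_option maxHeartbeats 1000000

local notation "adj" => ContinuousLinearMap.adjoint
local notation "⟪" x ", " y "⟫" => (inner ℂ x y : ℂ)

/-- The operator `B₀` with domain `dom D₀ ⊓ dom A`, `B₀ u = D₀(𝓜 u) + 𝓝 u + A u`. -/
noncomputable def B0 {K : Type*} [NormedAddCommGroup K] [InnerProductSpace ℂ K]
    (D₀ A : K →ₗ.[ℂ] K) (Mc N : K →L[ℂ] K)
    (hM : ∀ u ∈ D₀.domain, Mc u ∈ D₀.domain) : K →ₗ.[ℂ] K where
  domain := D₀.domain ⊓ A.domain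
  toFun :=
    D₀.toFun.comp (LinearMap.codRestrict D₀.domain
        ((Mc : K →ₗ[ℂ] K).comp (D₀.domain ⊓ A.domain).subtype)
        (fun u => hM _ (Submodule.mem_inf.mp u.2).1))
    + (N : K →ₗ[ℂ] K).comp (D₀.domain ⊓ A.domain).subtype
    + A.toFun.comp (Submodule.inclusion inf_le_right)

section Aux
variable {K : Type*} [NormedAddCommGroup K] [InnerProductSpace ℂ K]

lemma real_smul_complex (ε : ℝ) (w : K) : ε • w = (ε:ℂ) • w := by
  rw [RCLike.real_smul_eq_coe_smul (K := ℂ)]; norm_cast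

lemma real_inv_smul_complex (ε : ℝ) (w : K) : ε⁻¹ • w = (ε:ℂ)⁻¹ • w := by
  rw [RCLike.real_smul_eq_coe_smul (K := ℂ)]; norm_cast

lemma pmap_val_congr (f : K →ₗ.[ℂ] K) {x y : f.domain} (h : (x : K) = (y : K)) : f x = f y := by
  congr 1; exact Subtype.ext h

lemma B0_apply (D₀ A : K →ₗ.[ℂ] K) (Mc N : K →L[ℂ] K)
    (hM : ∀ u ∈ D₀.domain, Mc u ∈ D₀.domain) (φ : K) (hφ : φ ∈ D₀.domain ⊓ A.domain) :
    B0 D₀ A Mc N hM ⟨φ, hφ⟩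
      = D₀ ⟨Mc φ, hM φ (Submodule.mem_inf.mp hφ).1⟩ + N φ
        + A ⟨φ, (Submodule.mem_inf.mp hφ).2⟩ := rfl

end Aux

theorem stmt3
    {K : Type*} [NormedAddCommGroup K] [InnerProductSpace ℂ K] [CompleteSpace K]
    (D₀ : K →ₗ.[ℂ] K) (hD₀dense : Dense (D₀.domain : Set K)) (hD₀closed : D₀.IsClosed)
    (R : ℝ → K →L[ℂ] K)
    (hRdom : ∀ ε, 0 < ε → ∀ x : K, R ε x ∈ D₀.domain)
    (hRval : ∀ ε (hε : 0 < ε) (x : K),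
      D₀ ⟨R ε x, hRdom ε hε x⟩ = ε⁻¹ • (x - R ε x))
    (hRinv : ∀ ε, 0 < ε → ∀ u : D₀.domain, R ε ((u : K) + ε • D₀ u) = u)
    (hRnorm : ∀ ε, 0 < ε → ‖R ε‖ ≤ 1)
    (hRtendsto : ∀ x : K, Tendsto (fun ε => R ε x) (nhdsWithin 0 (Set.Ioi 0)) (nhds x))
    (hRadjdom : ∀ ε, 0 < ε → ∀ x : K,
      ContinuousLinearMap.adjoint (R ε) x ∈ D₀.adjoint.domain)
    (hRadjval : ∀ ε (hε : 0 < ε) (x : K),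
      D₀.adjoint ⟨ContinuousLinearMap.adjoint (R ε) x, hRadjdom ε hε x⟩
        = ε⁻¹ • (x - ContinuousLinearMap.adjoint (R ε) x))
    (hRadjtendsto : ∀ x : K,
      Tendsto (fun ε => ContinuousLinearMap.adjoint (R ε) x) (nhdsWithin 0 (Set.Ioi 0)) (nhds x))
    (Mc N Mop : K →L[ℂ] K)
    (hMdom : ∀ u ∈ D₀.domain, Mc u ∈ D₀.domain)
    (hMcomm : ∀ u : D₀.domain, Mc (D₀ u) = D₀ ⟨Mc u, hMdom u u.2⟩ + Mop u)
    (A : K →ₗ.[ℂ] K) (hAdense : Dense (A.domain : Set K)) (hAclosed : A.IsClosed)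
    (hARdom : ∀ ε, 0 < ε → ∀ u ∈ A.domain, R ε u ∈ A.domain)
    (hARcomm : ∀ ε (hε : 0 < ε) (u : A.domain),
      A ⟨R ε u, hARdom ε hε u u.2⟩ = R ε (A u))
    -- the family of truncation projections
    (P : ℝ → K →L[ℂ] K)
    (hPsa : ∀ a : ℝ, IsSelfAdjoint (P a))
    (hPidem : ∀ a : ℝ, (P a).comp (P a) = P a)
    (hPtendsto : ∀ x : K, Tendsto (fun a => P a x) atTop (nhds x))
    -- causality of 𝓜 and 𝓝
    (hMcausal : ∀ (a : ℝ) (u : K), P a (Mc u) = P a (Mc (P a u)))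
    (hNcausal : ∀ (a : ℝ) (u : K), P a (N u) = P a (N (P a u)))
    (c : ℝ) (hc : 0 < c)
    (hpos : ∀ (a : ℝ) (φ : K) (hφ : φ ∈ D₀.domain ⊓ A.domain),
      c * ‖P a φ‖ ^ 2 ≤ (inner ℂ (B0 D₀ A Mc N hMdom ⟨φ, hφ⟩) (P a φ) : ℂ).re)
    (hposadj : ∀ (ψ : K) (hψd : ψ ∈ D₀.adjoint.domain) (hψa : ψ ∈ A.adjoint.domain),
      c * ‖ψ‖ ^ 2 ≤ (inner ℂ (ContinuousLinearMap.adjoint Mc (D₀.adjoint ⟨ψ, hψd⟩)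
          + ContinuousLinearMap.adjoint N ψ + A.adjoint ⟨ψ, hψa⟩) ψ : ℂ).re) :
    (B0 D₀ A Mc N hMdom).IsClosable ∧
    Function.Bijective (fun u : (B0 D₀ A Mc N hMdom).closure.domain =>
      (B0 D₀ A Mc N hMdom).closure u) ∧
    (∀ u : (B0 D₀ A Mc N hMdom).closure.domain,
      ‖(u : K)‖ ≤ (1 / c) * ‖(B0 D₀ A Mc N hMdom).closure u‖) ∧
    -- causality of the solution operator `B⁻¹`
    (∀ (a : ℝ) (u : (B0 D₀ A Mc N hMdom).closure.domain),
      P a ((B0 D₀ A Mc N hMdom).closure u) = 0 → P a (u : K) = 0) := by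
  classical
  set B : K →ₗ.[ℂ] K := B0 D₀ A Mc N hMdom with hBdef
  set l : Filter ℝ := nhdsWithin 0 (Set.Ioi 0) with hldef
  have hεpos : ∀ᶠ ε in l, (0:ℝ) < ε := eventually_mem_nhdsWithin
  -- adjoint of R ε has norm ≤ 1
  have hRadjnorm : ∀ ε, 0 < ε → ∀ x : K, ‖ContinuousLinearMap.adjoint (R ε) x‖ ≤ ‖x‖ := by
    intro ε hε x
    calc ‖ContinuousLinearMap.adjoint (R ε) x‖ ≤ ‖ContinuousLinearMap.adjoint (R ε)‖ * ‖x‖ :=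
          (ContinuousLinearMap.adjoint (R ε)).le_opNorm x
      _ ≤ 1 * ‖x‖ := by
          have : ‖ContinuousLinearMap.adjoint (R ε)‖ = ‖R ε‖ :=
            (ContinuousLinearMap.adjoint : (K →L[ℂ] K) ≃ₗᵢ⋆[ℂ] (K →L[ℂ] K)).norm_map (R ε)
          rw [this]; exact mul_le_mul_of_nonneg_right (hRnorm ε hε) (norm_nonneg x)
      _ = ‖x‖ := one_mul _
  -- commutator identity
  have hcomm : ∀ ε, 0 < ε → ∀ v : K,
      R ε (Mc v) = Mc (R ε v) + (ε:ℂ) • (R ε (Mop (R ε v))) := by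
    intro ε hε v
    have hval : D₀ ⟨R ε v, hRdom ε hε v⟩ = ε⁻¹ • (v - R ε v) := hRval ε hε v
    have huv : R ε v + ε • D₀ ⟨R ε v, hRdom ε hε v⟩ = v := by
      rw [hval, smul_smul, mul_inv_cancel₀ hε.ne', one_smul]
      abel
    have h2 : Mc v = ((Mc (R ε v) : K)
          + ε • D₀ ⟨Mc (R ε v), hMdom _ (hRdom ε hε v)⟩) + ε • Mop (R ε v) := by
      conv_lhs => rw [← huv]
      rw [map_add, ContinuousLinearMap.map_smul_of_tower, hMcomm ⟨R ε v, hRdom ε hε v⟩, smul_add, add_assoc]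
    have h3 : R ε (Mc v) = Mc (R ε v) + ε • R ε (Mop (R ε v)) := by
      rw [h2, map_add, ContinuousLinearMap.map_smul_of_tower,
        hRinv ε hε ⟨Mc (R ε v), hMdom _ (hRdom ε hε v)⟩]
    rw [h3, RCLike.real_smul_eq_coe_smul (K := ℂ)]
    rfl
  have hcommadj : ∀ ε, 0 < ε → ∀ w : K,
      ContinuousLinearMap.adjoint Mc (ContinuousLinearMap.adjoint (R ε) w)
        = ContinuousLinearMap.adjoint (R ε) (ContinuousLinearMap.adjoint Mc w)
          + (ε:ℂ) • (ContinuousLinearMap.adjoint (R ε) (ContinuousLinearMap.adjoint Mop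
              (ContinuousLinearMap.adjoint (R ε) w))) := by
    intro ε hε w
    apply ext_inner_right ℂ
    intro x
    simp only [ContinuousLinearMap.adjoint_inner_left, hcomm ε hε x, inner_add_right,
      inner_smul_right, inner_add_left, inner_smul_left, Complex.conj_ofReal]
  -- the kernel of the "adjoint" is trivial
  have hker : ∀ ψ : K, (∀ φ : B.domain, (inner ℂ (B φ) ψ : ℂ) = 0) → ψ = 0 := by
    intro ψ hψ
    have main : ∀ ε, 0 < ε → c * ‖adj (R ε) ψ‖ ^ 2 ≤
        (⟪(adj (R ε) (adj Mop ψ) - adj (R ε) (adj Mop (adj (R ε) ψ))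
          + (adj N (adj (R ε) ψ) - adj (R ε) (adj N ψ))), (adj (R ε) ψ)⟫).re := by
      intro ε hε
      have hεne : (ε:ℂ) ≠ 0 := by exact_mod_cast ne_of_gt hε
      -- the test identity
      have S5 : ∀ x : A.domain,
          ⟪(adj (R ε) (adj Mop ψ) - (ε:ℂ)⁻¹ • (adj Mc ψ - adj (R ε) (adj Mc ψ))
            - adj (R ε) (adj N ψ)), ((x : K))⟫ = ⟪(adj (R ε) ψ), (A x)⟫ := by
        intro x
        have hm : R ε (x : K) ∈ D₀.domain ⊓ A.domain :=
          Submodule.mem_inf.mpr ⟨hRdom ε hε (x : K), hARdom ε hε (x : K) x.2⟩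
        -- value of B at the regularized vector
        have hMc' : D₀ ⟨Mc (R ε (x : K)), hMdom _ (Submodule.mem_inf.mp hm).1⟩
            = (ε:ℂ)⁻¹ • (Mc (x : K) - Mc (R ε (x : K))) - Mop (R ε (x : K)) := by
          have h1 := hMcomm ⟨R ε (x : K), hRdom ε hε (x : K)⟩
          rw [hRval ε hε (x : K)] at h1
          have h2 : Mc (ε⁻¹ • ((x : K) - R ε (x : K)))
              = (ε:ℂ)⁻¹ • (Mc (x : K) - Mc (R ε (x : K))) := by
            rw [ContinuousLinearMap.map_smul_of_tower, map_sub, real_inv_smul_complex]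
          rw [h2] at h1
          have h3 : D₀ ⟨Mc (R ε (x : K)), hMdom _ (Submodule.mem_inf.mp hm).1⟩
              = D₀ ⟨Mc (R ε (x : K)),
                  hMdom (⟨R ε (x : K), hRdom ε hε (x : K)⟩ : D₀.domain)
                    (⟨R ε (x : K), hRdom ε hε (x : K)⟩ : D₀.domain).2⟩ :=
            pmap_val_congr D₀ rfl
          rw [h3, eq_sub_iff_add_eq]
          exact h1.symm
        have hA' : A ⟨R ε (x : K), (Submodule.mem_inf.mp hm).2⟩ = R ε (A x) := by
          have h3 : A ⟨R ε (x : K), (Submodule.mem_inf.mp hm).2⟩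
              = A ⟨R ε (x : K), hARdom ε hε (x : K) x.2⟩ := pmap_val_congr A rfl
          rw [h3]
          exact hARcomm ε hε x
        have hBval2 : B ⟨R ε (x : K), hm⟩
            = ((ε:ℂ)⁻¹ • (Mc (x : K) - Mc (R ε (x : K))) - Mop (R ε (x : K)))
              + N (R ε (x : K)) + R ε (A x) := by
          rw [B0_apply D₀ A Mc N hMdom (R ε (x : K)) hm, hMc', hA']
        have h0 : ⟪ψ, (B ⟨R ε (x : K), hm⟩)⟫ = 0 := by
          rw [← inner_conj_symm, hψ ⟨R ε (x : K), hm⟩, map_zero]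
        rw [hBval2] at h0
        simp only [inner_add_right, inner_sub_right, inner_smul_right] at h0
        simp only [inner_sub_left, inner_smul_left, ContinuousLinearMap.adjoint_inner_left,
          map_inv₀, Complex.conj_ofReal]
        linear_combination -h0
      -- membership of the regularized adjoint vector
      have S6 : adj (R ε) ψ ∈ A.adjoint.domain :=
        LinearPMap.mem_adjoint_domain_of_exists _
          ⟨adj (R ε) (adj Mop ψ) - (ε:ℂ)⁻¹ • (adj Mc ψ - adj (R ε) (adj Mc ψ))
            - adj (R ε) (adj N ψ), S5⟩
      have S7 : A.adjoint ⟨adj (R ε) ψ, S6⟩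
          = adj (R ε) (adj Mop ψ) - (ε:ℂ)⁻¹ • (adj Mc ψ - adj (R ε) (adj Mc ψ))
            - adj (R ε) (adj N ψ) :=
        LinearPMap.adjoint_apply_eq hAdense _ S5
      have hineq := hposadj (adj (R ε) ψ) (hRadjdom ε hε ψ) S6
      rw [hRadjval ε hε ψ, S7] at hineq
      have hE : adj Mc (ε⁻¹ • (ψ - adj (R ε) ψ)) + adj N (adj (R ε) ψ)
            + (adj (R ε) (adj Mop ψ) - (ε:ℂ)⁻¹ • (adj Mc ψ - adj (R ε) (adj Mc ψ))
              - adj (R ε) (adj N ψ))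
          = adj (R ε) (adj Mop ψ) - adj (R ε) (adj Mop (adj (R ε) ψ))
            + (adj N (adj (R ε) ψ) - adj (R ε) (adj N ψ)) := by
        rw [real_inv_smul_complex, ContinuousLinearMap.map_smul, map_sub, hcommadj ε hε ψ]
        match_scalars <;> field_simp <;> ring
      rw [hE] at hineq
      exact hineq
    -- pass to the limit ε → 0⁺
    have hQtend := hRadjtendsto ψ
    have t1 : Tendsto (fun ε => c * ‖adj (R ε) ψ‖ ^ 2) l (nhds (c * ‖ψ‖ ^ 2)) :=
      (hQtend.norm.pow 2).const_mul c
    have tE : Tendsto (fun ε => adj (R ε) (adj Mop ψ) - adj (R ε) (adj Mop (adj (R ε) ψ))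
        + (adj N (adj (R ε) ψ) - adj (R ε) (adj N ψ))) l (nhds 0) := by
      have tA : Tendsto (fun ε => adj (R ε) (adj Mop ψ) - adj (R ε) (adj Mop (adj (R ε) ψ)))
          l (nhds 0) := by
        rw [tendsto_zero_iff_norm_tendsto_zero]
        apply squeeze_zero' (Eventually.of_forall fun ε => norm_nonneg _)
          (g := fun ε => ‖adj Mop‖ * ‖ψ - adj (R ε) ψ‖)
        · filter_upwards [hεpos] with ε hε
          calc ‖adj (R ε) (adj Mop ψ) - adj (R ε) (adj Mop (adj (R ε) ψ))‖
              = ‖adj (R ε) (adj Mop ψ - adj Mop (adj (R ε) ψ))‖ := by rw [map_sub]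
            _ ≤ ‖adj Mop ψ - adj Mop (adj (R ε) ψ)‖ := hRadjnorm ε hε _
            _ = ‖adj Mop (ψ - adj (R ε) ψ)‖ := by rw [map_sub]
            _ ≤ ‖adj Mop‖ * ‖ψ - adj (R ε) ψ‖ := (adj Mop).le_opNorm _
        · have : Tendsto (fun ε => ‖adj Mop‖ * ‖ψ - adj (R ε) ψ‖) l
              (nhds (‖adj Mop‖ * ‖ψ - ψ‖)) :=
            ((tendsto_const_nhds.sub hQtend).norm).const_mul _
          simpa using this
      have tB : Tendsto (fun ε => adj N (adj (R ε) ψ) - adj (R ε) (adj N ψ)) l (nhds 0) := by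
        have h1 : Tendsto (fun ε => adj N (adj (R ε) ψ)) l (nhds (adj N ψ)) :=
          ((adj N).continuous.tendsto ψ).comp hQtend
        have h2 : Tendsto (fun ε => adj (R ε) (adj N ψ)) l (nhds (adj N ψ)) :=
          hRadjtendsto (adj N ψ)
        simpa using h1.sub h2
      simpa using tA.add tB
    have t2 : Tendsto (fun ε => (⟪(adj (R ε) (adj Mop ψ) - adj (R ε) (adj Mop (adj (R ε) ψ))
        + (adj N (adj (R ε) ψ) - adj (R ε) (adj N ψ))), (adj (R ε) ψ)⟫).re) l (nhds 0) := by
      have := (Complex.continuous_re.tendsto _).comp (tE.inner hQtend)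
      rwa [inner_zero_left, Complex.zero_re] at this
    have hfinal : c * ‖ψ‖ ^ 2 ≤ 0 := by
      refine le_of_tendsto_of_tendsto t1 t2 ?_
      filter_upwards [hεpos] with ε hε
      exact main ε hε
    have h2 : ‖ψ‖ ^ 2 = 0 := le_antisymm (by nlinarith) (sq_nonneg _)
    have h3 : ‖ψ‖ = 0 := pow_eq_zero_iff two_ne_zero |>.mp h2
    exact norm_eq_zero.mp h3
  -- density of the adjoint domains
  have hAadjdense : Dense (A.adjoint.domain : Set K) := by
    have horth : (A.adjoint.domain)ᗮ = ⊥ := by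
      rw [Submodule.eq_bot_iff]
      intro z hz
      rw [Submodule.mem_orthogonal] at hz
      set e : WithLp 2 (K × K) ≃L[ℂ] K × K := WithLp.prodContinuousLinearEquiv 2 ℂ K K with hedef
      set G : Submodule ℂ (WithLp 2 (K × K)) :=
        A.graph.comap (e : WithLp 2 (K × K) →ₗ[ℂ] K × K) with hGdef
      have hGmem : ∀ x : WithLp 2 (K × K), x ∈ G ↔ e x ∈ A.graph := fun x => Iff.rfl
      have hGclosed : IsClosed (G : Set (WithLp 2 (K × K))) := by
        have : (G : Set (WithLp 2 (K × K))) = e ⁻¹' (A.graph : Set (K × K)) := rfl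
        rw [this]
        exact hAclosed.preimage e.continuous
      have h2 : G.topologicalClosure = G := by
        apply SetLike.coe_injective
        rw [Submodule.topologicalClosure_coe, hGclosed.closure_eq]
      have key : e.symm (0, z) ∈ G := by
        rw [← h2, ← Submodule.orthogonal_orthogonal_eq_closure, Submodule.mem_orthogonal]
        intro q hq
        rw [Submodule.mem_orthogonal] at hq
        have hq2 : (e q).2 ∈ A.adjoint.domain := by
          apply LinearPMap.mem_adjoint_domain_of_exists
          refine ⟨-(e q).1, fun x => ?_⟩
          have hx : e.symm ((x : K), A x) ∈ G := by
            rw [hGmem, e.apply_symm_apply]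
            exact A.mem_graph x
          have h0 := hq _ hx
          rw [WithLp.prod_inner_apply] at h0
          have hfst : (e.symm ((x : K), A x)).ofLp.1 = (x : K) := rfl
          have hsnd : (e.symm ((x : K), A x)).ofLp.2 = A x := rfl
          have hqfst : (q : WithLp 2 (K × K)).ofLp.1 = (e q).1 := rfl
          have hqsnd : (q : WithLp 2 (K × K)).ofLp.2 = (e q).2 := rfl
          rw [hfst, hsnd, hqfst, hqsnd] at h0
          have : (inner ℂ (A x) ((e q).2) : ℂ) = - inner ℂ (x : K) ((e q).1) := by
            rw [← add_eq_zero_iff_eq_neg']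
            linear_combination h0
          calc (inner ℂ (-(e q).1) (x : K) : ℂ)
              = - inner ℂ ((e q).1) (x : K) := by rw [inner_neg_left]
            _ = - (starRingEnd ℂ) (inner ℂ (x : K) ((e q).1)) := by rw [inner_conj_symm]
            _ = (starRingEnd ℂ) (- inner ℂ (x : K) ((e q).1)) := by rw [map_neg]
            _ = (starRingEnd ℂ) (inner ℂ (A x) ((e q).2)) := by rw [this]
            _ = inner ℂ ((e q).2) (A x) := by rw [inner_conj_symm]
        rw [WithLp.prod_inner_apply]
        have h1 : (e.symm (0, z)).ofLp.1 = (0 : K) := rfl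
        have h2 : (e.symm (0, z)).ofLp.2 = z := rfl
        rw [h1, h2, inner_zero_right, zero_add]
        exact hz _ hq2
      rw [hGmem, e.apply_symm_apply] at key
      rw [LinearPMap.mem_graph_iff] at key
      obtain ⟨y, hy1, hy2⟩ := key
      have hy0 : y = 0 := Subtype.ext hy1
      have h3 : z = A y := hy2.symm
      rw [hy0] at h3
      exact h3.trans A.toFun.map_zero
    rw [Submodule.dense_iff_topologicalClosure_eq_top,
      ← Submodule.orthogonal_orthogonal_eq_closure, horth, Submodule.bot_orthogonal_eq_top]
  have hARadj : ∀ ε, 0 < ε → ∀ ψ ∈ A.adjoint.domain,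
      ContinuousLinearMap.adjoint (R ε) ψ ∈ A.adjoint.domain := by
    intro ε hε ψ hψ
    apply LinearPMap.mem_adjoint_domain_of_exists
    refine ⟨ContinuousLinearMap.adjoint (R ε) (A.adjoint ⟨ψ, hψ⟩), fun x => ?_⟩
    rw [ContinuousLinearMap.adjoint_inner_left, ContinuousLinearMap.adjoint_inner_left]
    have h1 : (inner ℂ (A.adjoint ⟨ψ, hψ⟩ : K) ((R ε) (x : K)) : ℂ)
        = inner ℂ ψ (A ⟨R ε (x : K), hARdom ε hε _ x.2⟩) :=
      LinearPMap.adjoint_isFormalAdjoint hAdense ⟨ψ, hψ⟩ ⟨R ε (x : K), hARdom ε hε _ x.2⟩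
    rw [h1, hARcomm ε hε x]
  have hDomdense : Dense ((D₀.adjoint.domain ⊓ A.adjoint.domain : Submodule ℂ K) : Set K) := by
    have hsub : (A.adjoint.domain : Set K)
        ⊆ closure ((D₀.adjoint.domain ⊓ A.adjoint.domain : Submodule ℂ K) : Set K) := by
      intro ψ hψ
      apply mem_closure_of_tendsto (hRadjtendsto ψ)
      filter_upwards [hεpos] with ε hε
      exact Submodule.mem_inf.mpr ⟨hRadjdom ε hε ψ, hARadj ε hε ψ hψ⟩
    rw [dense_iff_closure_eq]
    apply Set.Subset.antisymm (Set.subset_univ _)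
    calc Set.univ = closure (A.adjoint.domain : Set K) := hAadjdense.closure_eq.symm
      _ ⊆ closure (closure ((D₀.adjoint.domain ⊓ A.adjoint.domain : Submodule ℂ K) : Set K)) :=
          closure_mono hsub
      _ = _ := closure_closure
  have hformal : ∀ (ψ : K) (h1 : ψ ∈ D₀.adjoint.domain) (h2 : ψ ∈ A.adjoint.domain)
      (φ : B.domain), (inner ℂ (B φ) ψ : ℂ)
        = inner ℂ (φ : K) (ContinuousLinearMap.adjoint Mc (D₀.adjoint ⟨ψ, h1⟩)
            + ContinuousLinearMap.adjoint N ψ + A.adjoint ⟨ψ, h2⟩) := by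
    intro ψ h1 h2 φ
    have hD := (LinearPMap.adjoint_isFormalAdjoint hD₀dense (T := D₀)).symm
    have hA := (LinearPMap.adjoint_isFormalAdjoint hAdense (T := A)).symm
    have hBval : B φ = D₀ ⟨Mc (φ : K), hMdom _ (Submodule.mem_inf.mp φ.2).1⟩ + N (φ : K)
        + A ⟨(φ : K), (Submodule.mem_inf.mp φ.2).2⟩ := B0_apply D₀ A Mc N hMdom (φ : K) φ.2
    rw [hBval, inner_add_left, inner_add_left, inner_add_right, inner_add_right]
    rw [hD ⟨Mc (φ : K), hMdom _ (Submodule.mem_inf.mp φ.2).1⟩ ⟨ψ, h1⟩]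
    rw [hA ⟨(φ : K), (Submodule.mem_inf.mp φ.2).2⟩ ⟨ψ, h2⟩]
    rw [ContinuousLinearMap.adjoint_inner_right, ContinuousLinearMap.adjoint_inner_right]
  have hclosable : B.IsClosable := by
    have hg : ∀ p ∈ B.graph.topologicalClosure, p.1 = 0 → p.2 = 0 := by
      intro p hp hp1
      have hvanish : ∀ ψ ∈ (D₀.adjoint.domain ⊓ A.adjoint.domain : Submodule ℂ K),
          (inner ℂ p.2 ψ : ℂ) = 0 := by
        intro ψ hψ
        obtain ⟨h1, h2⟩ := Submodule.mem_inf.mp hψ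
        set w : K := ContinuousLinearMap.adjoint Mc (D₀.adjoint ⟨ψ, h1⟩)
            + ContinuousLinearMap.adjoint N ψ + A.adjoint ⟨ψ, h2⟩ with hwdef
        have hZc : IsClosed {q : K × K | (inner ℂ q.2 ψ : ℂ) = inner ℂ q.1 w} :=
          isClosed_eq (Continuous.inner continuous_snd continuous_const)
            (Continuous.inner continuous_fst continuous_const)
        have hZ : (B.graph : Set (K × K)) ⊆ {q : K × K | (inner ℂ q.2 ψ : ℂ) = inner ℂ q.1 w} := by
          rintro q hq
          rw [SetLike.mem_coe, LinearPMap.mem_graph_iff] at hq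
          obtain ⟨y, hy1, hy2⟩ := hq
          rw [Set.mem_setOf_eq, ← hy1, ← hy2]
          exact hformal ψ h1 h2 y
        have hp' : p ∈ closure (B.graph : Set (K × K)) := by
          rw [← Submodule.topologicalClosure_coe]; exact hp
        have := closure_minimal hZ hZc hp'
        rw [Set.mem_setOf_eq] at this
        rw [this, hp1, inner_zero_left]
      have hfun : (fun y : K => (inner ℂ p.2 y : ℂ)) = fun _ : K => (0 : ℂ) := by
        apply Continuous.ext_on hDomdense
        · exact Continuous.inner continuous_const continuous_id
        · exact continuous_const
        · intro x hx; exact hvanish x hx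
      have : (inner ℂ p.2 p.2 : ℂ) = 0 := congrFun hfun p.2
      exact inner_self_eq_zero.mp this
    exact ⟨B.graph.topologicalClosure.toLinearPMap,
      (Submodule.toLinearPMap_graph_eq _ hg).symm⟩
  -- coercivity on the closure
  have hgraphC : ∀ p : K × K, p ∈ B.closure.graph →
      ∀ a, c * ‖P a p.1‖ ^ 2 ≤ (inner ℂ p.2 (P a p.1) : ℂ).re := by
    intro p hp a
    set C : Set (K × K) :=
      {q : K × K | ∀ a, c * ‖P a q.1‖ ^ 2 ≤ (inner ℂ q.2 (P a q.1) : ℂ).re} with hCdef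
    have hCclosed : IsClosed C := by
      have : C = ⋂ b, {q : K × K | c * ‖P b q.1‖ ^ 2 ≤ (inner ℂ q.2 (P b q.1) : ℂ).re} := by
        ext q; simp [hCdef, Set.mem_iInter]
      rw [this]
      refine isClosed_iInter fun b => isClosed_le ?_ ?_
      · exact continuous_const.mul (((P b).continuous.comp continuous_fst).norm.pow 2)
      · exact Complex.continuous_re.comp
          (Continuous.inner continuous_snd ((P b).continuous.comp continuous_fst))
    have hsub : (B.graph : Set (K × K)) ⊆ C := by
      rintro q hq
      rw [SetLike.mem_coe, LinearPMap.mem_graph_iff] at hq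
      obtain ⟨y, hy1, hy2⟩ := hq
      intro b
      have := hpos b (y : K) y.2
      rw [← hy1, ← hy2]
      exact this
    have hp' : p ∈ closure (B.graph : Set (K × K)) := by
      rw [← Submodule.topologicalClosure_coe, hclosable.graph_closure_eq_closure_graph]
      exact hp
    exact closure_minimal hsub hCclosed hp' a
  have hcoercive : ∀ u : B.closure.domain, ∀ a,
      c * ‖P a (u : K)‖ ^ 2 ≤ (inner ℂ (B.closure u) (P a (u : K)) : ℂ).re := by
    intro u a
    exact hgraphC ((u : K), B.closure u) (B.closure.mem_graph u) a
  have hcoercive' : ∀ u : B.closure.domain,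
      c * ‖(u : K)‖ ^ 2 ≤ (inner ℂ (B.closure u) ((u : K)) : ℂ).re := by
    intro u
    refine le_of_tendsto_of_tendsto' (b := atTop)
      (f := fun a : ℝ => c * ‖P a (u : K)‖ ^ 2)
      (g := fun a : ℝ => (inner ℂ (B.closure u) (P a (u : K)) : ℂ).re) ?_ ?_ (hcoercive u)
    · exact (((hPtendsto (u : K)).norm.pow 2).const_mul c)
    · exact (Complex.continuous_re.tendsto _).comp
        (Filter.Tendsto.inner tendsto_const_nhds (hPtendsto (u : K)))
  have hbound : ∀ u : B.closure.domain, ‖(u : K)‖ ≤ (1 / c) * ‖B.closure u‖ := by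
    intro u
    have h1 := hcoercive' u
    have h2 : ((inner ℂ (B.closure u) ((u : K)) : ℂ)).re ≤ ‖B.closure u‖ * ‖(u : K)‖ := by
      refine le_trans (Complex.re_le_norm _) ?_
      exact norm_inner_le_norm _ _
    rcases eq_or_lt_of_le (norm_nonneg (u : K)) with h0 | h0
    · rw [← h0]; positivity
    · have h3 := le_trans h1 h2
      have h4 : c * ‖(u : K)‖ ≤ ‖B.closure u‖ :=
        le_of_mul_le_mul_right (by nlinarith) h0
      calc ‖(u : K)‖ = (1/c) * (c * ‖(u : K)‖) := by field_simp
        _ ≤ (1/c) * ‖B.closure u‖ := by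
            apply mul_le_mul_of_nonneg_left h4
            positivity
  refine ⟨hclosable, ⟨?_, ?_⟩, hbound, ?_⟩
  · -- injective
    intro u v huv
    have h := hbound (u - v)
    simp only at huv
    have : B.closure (u - v) = 0 := by
      rw [LinearPMap.map_sub, huv, sub_self]
    rw [this, norm_zero, mul_zero] at h
    have : ((u - v : B.closure.domain) : K) = 0 := norm_le_zero_iff.mp h
    have : (u:K) = (v:K) := by
      rwa [Submodule.coe_sub, sub_eq_zero] at this
    exact Subtype.ext this
  · -- surjective
    intro f
    -- the range of B₀ is dense
    have h₁ : (LinearMap.range B.toFun)ᗮ = ⊥ := by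
      rw [Submodule.eq_bot_iff]
      intro z hz
      rw [Submodule.mem_orthogonal] at hz
      exact hker z fun φ => hz _ (LinearMap.mem_range.mpr ⟨φ, rfl⟩)
    have hdense : Dense ((LinearMap.range B.toFun : Submodule ℂ K) : Set K) := by
      rw [Submodule.dense_iff_topologicalClosure_eq_top,
        ← Submodule.orthogonal_orthogonal_eq_closure, h₁, Submodule.bot_orthogonal_eq_top]
    -- the range of the closure is closed
    have hclosedrange : IsClosed (Set.range fun u : B.closure.domain => B.closure u) := by
      apply isClosed_of_closure_subset
      intro g hg
      rw [mem_closure_iff_seq_limit] at hg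
      obtain ⟨y, hy, hylim⟩ := hg
      choose u hu using hy
      have hu' : ∀ n, B.closure (u n) = y n := hu
      have hcauchy : CauchySeq (fun n => ((u n : K))) := by
        rw [Metric.cauchySeq_iff]
        intro δ hδ
        have hy' := hylim.cauchySeq
        rw [Metric.cauchySeq_iff] at hy'
        obtain ⟨Nn, hN⟩ := hy' (c * δ) (by positivity)
        refine ⟨Nn, fun m hm n hn => ?_⟩
        have hb := hbound (u m - u n)
        rw [LinearPMap.map_sub, hu' m, hu' n] at hb
        have hsc : ((u m - u n : B.closure.domain) : K) = (u m : K) - (u n : K) := rfl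
        rw [hsc] at hb
        have hd := hN m hm n hn
        rw [dist_eq_norm] at hd ⊢
        calc ‖(u m : K) - (u n : K)‖ ≤ (1 / c) * ‖y m - y n‖ := hb
          _ < (1 / c) * (c * δ) := by
              apply mul_lt_mul_of_pos_left hd
              positivity
          _ = δ := by field_simp
      obtain ⟨v, hv⟩ := cauchySeq_tendsto_of_complete hcauchy
      have hgraphmem : ((v, g) : K × K) ∈ (B.closure.graph : Set (K × K)) := by
        have hclosed : IsClosed (B.closure.graph : Set (K × K)) := hclosable.closure_isClosed
        refine hclosed.isSeqClosed (fun n => ?_) (hv.prodMk_nhds hylim)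
        show ((u n : K), y n) ∈ (B.closure.graph : Set (K × K))
        rw [← hu' n]
        exact B.closure.mem_graph (u n)
      rw [SetLike.mem_coe, LinearPMap.mem_graph_iff] at hgraphmem
      obtain ⟨w, hw1, hw2⟩ := hgraphmem
      exact ⟨w, hw2⟩
    -- the range of B₀ is contained in the range of the closure
    have hsub : ((LinearMap.range B.toFun : Submodule ℂ K) : Set K)
        ⊆ Set.range (fun u : B.closure.domain => B.closure u) := by
      rintro z hz
      rw [SetLike.mem_coe, LinearMap.mem_range] at hz
      obtain ⟨φ, rfl⟩ := hz
      refine ⟨⟨(φ : K), B.le_closure.1 φ.2⟩, ?_⟩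
      exact (B.le_closure.2 (rfl : ((φ : K)) = ((⟨(φ : K), B.le_closure.1 φ.2⟩
        : B.closure.domain) : K))).symm
    have hf : f ∈ Set.range (fun u : B.closure.domain => B.closure u) := by
      have h1 : f ∈ closure ((LinearMap.range B.toFun : Submodule ℂ K) : Set K) := by
        rw [hdense.closure_eq]; trivial
      have h2 := closure_mono hsub h1
      rwa [hclosedrange.closure_eq] at h2
    exact hf
  · -- causality
    intro a u hu
    have h := hcoercive u a
    have hz : (inner ℂ (B.closure u) (P a (u : K)) : ℂ) = 0 := by
      have hP : ContinuousLinearMap.adjoint (P a) = P a := by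
        rw [← ContinuousLinearMap.star_eq_adjoint]; exact hPsa a
      calc (inner ℂ (B.closure u) (P a (u : K)) : ℂ)
          = inner ℂ (ContinuousLinearMap.adjoint (P a) (B.closure u)) (u : K) :=
            (ContinuousLinearMap.adjoint_inner_left _ _ _).symm
        _ = inner ℂ (P a (B.closure u)) (u : K) := by rw [hP]
        _ = 0 := by rw [hu, inner_zero_left]
    rw [hz] at h
    simp only [Complex.zero_re] at h
    have : ‖P a (u : K)‖ ^ 2 ≤ 0 := by nlinarith
    have : ‖P a (u : K)‖ = 0 := by nlinarith [sq_nonneg ‖P a (u:K)‖, norm_nonneg (P a (u:K))]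
    exact norm_eq_zero.mp this
end

section
/- Assume in addition: ν > 0 and the adjoint of D₀ satisfies dom(D₀*) = dom(D₀) with D₀*u = 2νu − D₀u for all u ∈ dom(D₀); A is maximal monotone, i.e., Re⟨Au, u⟩ ≥ 0 for all u ∈ dom(A) and 1 + A maps dom(A) onto K; (P_a)_{a∈ℝ} is a family of self-adjoint idempotent bounded linear operators on K with P_a x → x as a → ∞ for every x ∈ K; A is causal and truncation-invariant with respect to (P_a): for every a ∈ ℝ and u ∈ dom(A), P_a u ∈ dom(A) and P_a(Au) = P_a(A(P_a u)); 𝓜 and 𝓝 are causal: P_a 𝓜 u = P_a 𝓜 (P_a u) and P_a 𝓝 u = P_a 𝓝 (P_a u) for all a ∈ ℝ, u ∈ K; and there is c > 0 with Re⟨D₀(𝓜u) + 𝓝u, P_a u⟩ ≥ c‖P_a u‖² for all u ∈ dom(D₀) and all a ∈ ℝ. Then B₀ is closable, its closure B maps dom(B) bijectively onto K with bounded inverse, and B⁻¹ is causal: for every a ∈ ℝ and f ∈ K with P_a f = 0 one has P_a(B⁻¹ f) = 0. -/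
open Filter
set_option linter.unusedSectionVars false
set_option maxHeartbeats 1000000

section Aux
variable {K : Type*} [NormedAddCommGroup K] [InnerProductSpace ℂ K] [CompleteSpace K]

local notation "⟪" x ", " y "⟫" => @inner ℂ _ _ x y

lemma real_smul_coe (t : ℝ) (x : K) : t • x = (t : ℂ) • x :=
  RCLike.real_smul_eq_coe_smul (K := ℂ) t x


lemma real_smul_inner_left (t : ℝ) (x y : K) : ⟪t • x, y⟫ = (t:ℂ) * ⟪x, y⟫ := by
  rw [real_smul_coe, inner_smul_left]
  simp [Complex.conj_ofReal]


lemma real_smul_inner_right (t : ℝ) (x y : K) : ⟪x, t • y⟫ = (t:ℂ) * ⟪x, y⟫ := by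
  rw [real_smul_coe, inner_smul_right]


lemma cre_real_mul (t : ℝ) (z : ℂ) : ((t:ℂ) * z).re = t * z.re := by
  simp [Complex.mul_re]


lemma cinner_self (x : K) : (⟪x, x⟫).re = ‖x‖^2 := by
  rw [← RCLike.re_to_complex, inner_self_eq_norm_sq]


lemma cre_inner_le (x y : K) : (⟪x, y⟫).re ≤ ‖x‖ * ‖y‖ := by
  rw [← RCLike.re_to_complex]; exact re_inner_le_norm x y

variable {A : K →ₗ.[ℂ] K}

/-- contraction estimate for `1 + tA` when `A` is monotone -/


lemma cre_symm (x y : K) : (⟪x, y⟫).re = (⟪y, x⟫).re := by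
  rw [← inner_conj_symm, Complex.conj_re]

variable {A : K →ₗ.[ℂ] K}

lemma aux_contract (hm : ∀ u : A.domain, 0 ≤ (⟪A u, (u:K)⟫).re) {t : ℝ} (ht : 0 < t)
    (u : A.domain) : ‖(u : K)‖ ≤ ‖(u : K) + t • A u‖ := by
  rcases eq_or_ne ‖(u:K)‖ 0 with h | h
  · rw [h]; exact norm_nonneg _
  · have h2 : ‖(u:K)‖^2 ≤ (⟪(u:K) + t • A u, (u:K)⟫).re := by
      rw [inner_add_left, real_smul_inner_left, Complex.add_re, cre_real_mul, cinner_self]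
      nlinarith [hm u, ht.le]
    have h3 := cre_inner_le ((u:K) + t • A u) (u:K)
    have h5 : 0 < ‖(u:K)‖ := lt_of_le_of_ne (norm_nonneg _) (Ne.symm h)
    nlinarith

/-- existence of a contractive resolvent `(1+tA)⁻¹` -/


lemma aux_resolvent (hm : ∀ u : A.domain, 0 ≤ (⟪A u, (u:K)⟫).re) {t : ℝ} (ht : 0 < t)
    (honto : ∀ y : K, ∃ u : A.domain, (u : K) + t • A u = y) :
    ∃ J : K →L[ℂ] K, ‖J‖ ≤ 1 ∧ (∀ u : A.domain, J ((u : K) + t • A u) = u) ∧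
      ∀ y : K, ∃ u : A.domain, ((u : K) = J y ∧ (u : K) + t • A u = y) := by
  classical
  set Φ : A.domain →ₗ[ℂ] K :=
    A.domain.subtype + (t : ℂ) • A.toFun with hΦ
  have hΦapp : ∀ u : A.domain, Φ u = (u : K) + t • A u := by
    intro u
    rw [real_smul_coe]
    rfl
  have hΦinj : Function.Injective Φ := by
    intro u₁ u₂ h12
    have h1 : ‖((u₁ - u₂ : A.domain) : K)‖ ≤ ‖Φ (u₁ - u₂)‖ := by
      rw [hΦapp]; exact aux_contract hm ht _
    rw [map_sub, h12, sub_self, norm_zero] at h1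
    have h2 : u₁ - u₂ = 0 := by
      rwa [norm_le_zero_iff, Submodule.coe_eq_zero] at h1
    rw [sub_eq_zero] at h2; exact h2
  have honto' : ∀ y : K, ∃ u : A.domain, Φ u = y := by
    intro y; obtain ⟨u, hu⟩ := honto y; exact ⟨u, by rw [hΦapp]; exact hu⟩
  set g : K → A.domain := fun y => (honto' y).choose with hg
  have hgr : ∀ y, Φ (g y) = y := fun y => (honto' y).choose_spec
  have hgl : ∀ u, g (Φ u) = u := fun u => hΦinj (hgr (Φ u))
  set Jlin : K →ₗ[ℂ] K := A.domain.subtype.comp (LinearMap.inverse Φ g hgl hgr) with hJ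
  have hJapp : ∀ y, Jlin y = (g y : K) := fun y => rfl
  have hbound : ∀ y, ‖Jlin y‖ ≤ 1 * ‖y‖ := by
    intro y
    rw [hJapp, one_mul]
    calc ‖(g y : K)‖ ≤ ‖(g y : K) + t • A (g y)‖ := aux_contract hm ht _
    _ = ‖y‖ := by rw [← hΦapp, hgr]
  refine ⟨LinearMap.mkContinuous Jlin 1 hbound, ?_, ?_, ?_⟩
  · exact LinearMap.mkContinuous_norm_le _ zero_le_one _
  · intro u
    show Jlin _ = _
    rw [← hΦapp, hJapp, hgl]
  · intro y
    exact ⟨g y, rfl, by rw [← hΦapp]; exact hgr y⟩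


lemma aux_onto_step (hm : ∀ u : A.domain, 0 ≤ (⟪A u, (u:K)⟫).re) {t : ℝ} (ht : 0 < t)
    (honto : ∀ y : K, ∃ u : A.domain, (u : K) + t • A u = y) :
    ∀ y : K, ∃ u : A.domain, (u : K) + (3/4 * t) • A u = y := by
  obtain ⟨J, hJn, hJl, hJr⟩ := aux_resolvent hm ht honto
  set W : K →L[ℂ] K := ((t/4 : ℝ) : ℂ) • (((t:ℂ)⁻¹) • (1 - J)) with hW
  have hWnorm : ‖W‖ < 1 := by
    have h1 : ‖(1 : K →L[ℂ] K) - J‖ ≤ 2 := by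
      calc ‖(1 : K →L[ℂ] K) - J‖ ≤ ‖(1 : K →L[ℂ] K)‖ + ‖J‖ := norm_sub_le _ _
      _ ≤ 1 + 1 := by
          gcongr
          exact ContinuousLinearMap.norm_id_le
      _ = 2 := by norm_num
    calc ‖W‖ ≤ ‖((t/4 : ℝ) : ℂ)‖ * (‖((t:ℂ)⁻¹)‖ * ‖(1 : K →L[ℂ] K) - J‖) := by
          rw [hW]
          refine le_trans (norm_smul_le _ _) ?_
          gcongr
          exact norm_smul_le _ _
    _ ≤ (t/4) * (t⁻¹ * 2) := by
          simp only [Complex.norm_real, norm_inv,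
            Real.norm_eq_abs]
          rw [abs_of_pos (by linarith), abs_of_pos ht]
          gcongr
    _ = 1/2 := by field_simp; ring
    _ < 1 := by norm_num
  set un := Units.oneSub W hWnorm with hun
  intro y
  set z := ((un⁻¹ : (K →L[ℂ] K)ˣ) : K →L[ℂ] K) y with hz
  obtain ⟨u, hu1, hu2⟩ := hJr z
  refine ⟨u, ?_⟩
  have htAu : t • (A u : K) = z - J z := by
    rw [← hu1, eq_sub_iff_add_eq, add_comm]; exact hu2
  have hAu34 : (3/4 * t) • (A u : K) = t • (A u : K) - (1/4 : ℝ) • (z - J z) := by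
    rw [← htAu, smul_smul, ← sub_smul]; congr 1; ring
  have hWz : W z = (1/4 : ℝ) • (z - J z) := by
    have ht0 : (t:ℂ) ≠ 0 := Complex.ofReal_ne_zero.mpr (ne_of_gt ht)
    rw [hW]
    simp only [ContinuousLinearMap.smul_apply, ContinuousLinearMap.sub_apply,
      ContinuousLinearMap.one_apply]
    rw [real_smul_coe (1/4 : ℝ), smul_smul]
    congr 1
    push_cast
    field_simp
  have hfin : (u : K) + (3/4 * t) • A u = z - W z := by
    rw [hAu34, hWz, ← hu2]; abel
  rw [hfin]
  have h2 : ((un : K →L[ℂ] K) * ((un⁻¹ : (K →L[ℂ] K)ˣ) : K →L[ℂ] K)) y = y := by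
    rw [Units.mul_inv]; rfl
  calc z - W z = (un : K →L[ℂ] K) z := by
        show z - W z = (1 - W) z
        simp [ContinuousLinearMap.sub_apply]
  _ = y := by rw [hz]; exact h2


lemma aux_adjoint_monotone (hm : ∀ u : A.domain, 0 ≤ (⟪A u, (u:K)⟫).re)
    (hmax : ∀ y : K, ∃ u : A.domain, (u : K) + A u = y)
    (w q : K) (hwq : ∀ u : A.domain, ⟪A u, w⟫ = ⟪(u:K), q⟫) : 0 ≤ (⟪q, w⟫).re := by
  have honto : ∀ n : ℕ, ∀ y : K, ∃ u : A.domain, (u:K) + ((3/4:ℝ)^n) • A u = y := by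
    intro n; induction n with
    | zero => simpa using hmax
    | succ n ih =>
        have h := aux_onto_step hm (pow_pos (by norm_num) n) ih
        intro y; obtain ⟨u, hu⟩ := h y
        exact ⟨u, by rw [pow_succ, mul_comm ((3/4:ℝ)^n)]; exact hu⟩
  have key : ∀ n : ℕ, 0 ≤ 2 * (⟪w, q⟫).re + (3/4:ℝ)^n * ‖q‖^2 := by
    intro n
    set t := ((3:ℝ)/4)^n with hts
    have ht : 0 < t := pow_pos (by norm_num) n
    obtain ⟨J, hJn, hJl, hJr⟩ := aux_resolvent hm ht (honto n)
    set Js := ContinuousLinearMap.adjoint J with hJs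
    have hJsw : Js (w + t • q) = w := by
      set d := Js (w + t • q) - w with hd
      have hz : ∀ u : A.domain, ⟪(u:K) + t • A u, d⟫ = 0 := by
        intro u
        rw [hd, inner_sub_right]
        have h1 : ⟪(u:K) + t • A u, Js (w + t•q)⟫ = ⟪(u:K), w + t•q⟫ := by
          rw [hJs, ContinuousLinearMap.adjoint_inner_right, hJl]
        have h2 : ⟪(u:K) + t • A u, w⟫ = ⟪(u:K), w + t • q⟫ := by
          rw [inner_add_left, inner_add_right, real_smul_inner_left, real_smul_inner_right, hwq]
        rw [h1, h2, sub_self]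
      obtain ⟨u, hu⟩ := honto n d
      have h3 := hz u
      rw [hu] at h3
      have h4 : d = 0 := inner_self_eq_zero.mp h3
      rw [hd] at h4
      exact sub_eq_zero.mp h4
    have hnorm : ‖w‖ ≤ ‖w + t • q‖ := by
      calc ‖w‖ = ‖Js (w + t • q)‖ := by rw [hJsw]
      _ ≤ ‖Js‖ * ‖w + t • q‖ := Js.le_opNorm _
      _ ≤ 1 * ‖w + t • q‖ := by
          gcongr
          rw [hJs]
          calc ‖ContinuousLinearMap.adjoint J‖ = ‖J‖ :=
                LinearIsometryEquiv.norm_map ContinuousLinearMap.adjoint J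
          _ ≤ 1 := hJn
      _ = ‖w + t • q‖ := one_mul _
    have hsq : ‖w‖^2 ≤ ‖w‖^2 + 2 * (t * (⟪w, q⟫).re) + t^2 * ‖q‖^2 := by
      have he : ‖w + t • q‖^2 = ‖w‖^2 + 2 * (t * (⟪w, q⟫).re) + t^2 * ‖q‖^2 := by
        have h5 := norm_add_sq (𝕜 := ℂ) w (t • q)
        rw [norm_smul, real_smul_inner_right] at h5
        simp only [RCLike.re_to_complex] at h5
        rw [h5, cre_real_mul]
        rw [Real.norm_eq_abs, abs_of_pos ht]
        ring
      calc ‖w‖^2 ≤ ‖w + t • q‖^2 := by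
            have := pow_le_pow_left₀ (norm_nonneg w) hnorm 2
            exact this
      _ = _ := he
    nlinarith [ht, sq_nonneg t]
  have hlim : Tendsto (fun n : ℕ => 2 * (⟪w, q⟫).re + (3/4:ℝ)^n * ‖q‖^2) atTop
      (nhds (2 * (⟪w, q⟫).re + 0 * ‖q‖^2)) := by
    apply Tendsto.add tendsto_const_nhds
    exact (tendsto_pow_atTop_nhds_zero_of_lt_one (by norm_num) (by norm_num)).mul_const _
  have h6 : 0 ≤ 2 * (⟪w, q⟫).re + 0 * ‖q‖^2 :=
    le_of_tendsto_of_tendsto' tendsto_const_nhds hlim key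
  have h7 : 0 ≤ (⟪w, q⟫).re := by nlinarith
  rw [← inner_conj_symm, Complex.conj_re]
  exact h7


end Aux

theorem stmt5
    {K : Type*} [NormedAddCommGroup K] [InnerProductSpace ℂ K] [CompleteSpace K]
    (D₀ : K →ₗ.[ℂ] K) (hD₀dense : Dense (D₀.domain : Set K)) (hD₀closed : D₀.IsClosed)
    (R : ℝ → K →L[ℂ] K)
    (hRdom : ∀ ε, 0 < ε → ∀ x : K, R ε x ∈ D₀.domain)
    (hRval : ∀ ε (hε : 0 < ε) (x : K),
      D₀ ⟨R ε x, hRdom ε hε x⟩ = ε⁻¹ • (x - R ε x))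
    (hRinv : ∀ ε, 0 < ε → ∀ u : D₀.domain, R ε ((u : K) + ε • D₀ u) = u)
    (hRnorm : ∀ ε, 0 < ε → ‖R ε‖ ≤ 1)
    (hRtendsto : ∀ x : K, Tendsto (fun ε => R ε x) (nhdsWithin 0 (Set.Ioi 0)) (nhds x))
    (hRadjdom : ∀ ε, 0 < ε → ∀ x : K,
      ContinuousLinearMap.adjoint (R ε) x ∈ D₀.adjoint.domain)
    (hRadjval : ∀ ε (hε : 0 < ε) (x : K),
      D₀.adjoint ⟨ContinuousLinearMap.adjoint (R ε) x, hRadjdom ε hε x⟩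
        = ε⁻¹ • (x - ContinuousLinearMap.adjoint (R ε) x))
    (hRadjtendsto : ∀ x : K,
      Tendsto (fun ε => ContinuousLinearMap.adjoint (R ε) x) (nhdsWithin 0 (Set.Ioi 0)) (nhds x))
    (Mc N Mop : K →L[ℂ] K)
    (hMdom : ∀ u ∈ D₀.domain, Mc u ∈ D₀.domain)
    (hMcomm : ∀ u : D₀.domain, Mc (D₀ u) = D₀ ⟨Mc u, hMdom u u.2⟩ + Mop u)
    (A : K →ₗ.[ℂ] K) (hAdense : Dense (A.domain : Set K)) (hAclosed : A.IsClosed)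
    (hARdom : ∀ ε, 0 < ε → ∀ u ∈ A.domain, R ε u ∈ A.domain)
    (hARcomm : ∀ ε (hε : 0 < ε) (u : A.domain),
      A ⟨R ε u, hARdom ε hε u u.2⟩ = R ε (A u))
    -- the adjoint of `D₀` is `2ν - D₀`
    (ν : ℝ) (hν : 0 < ν)
    (hadjdom : D₀.adjoint.domain = D₀.domain)
    (hadjval : ∀ (u : K) (hu : u ∈ D₀.domain) (hu' : u ∈ D₀.adjoint.domain),
      D₀.adjoint ⟨u, hu'⟩ = ((2 * ν : ℝ) : ℂ) • u - D₀ ⟨u, hu⟩)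
    -- `A` is maximal monotone
    (hAmono : ∀ u : A.domain, 0 ≤ (inner ℂ (A u) (u : K) : ℂ).re)
    (hAmax : ∀ y : K, ∃ u : A.domain, (u : K) + A u = y)
    -- the family of truncation projections
    (P : ℝ → K →L[ℂ] K)
    (hPsa : ∀ a : ℝ, IsSelfAdjoint (P a))
    (hPidem : ∀ a : ℝ, (P a).comp (P a) = P a)
    (hPtendsto : ∀ x : K, Tendsto (fun a => P a x) atTop (nhds x))
    -- `A` is causal and truncation-invariant
    (hPAdom : ∀ (a : ℝ), ∀ u ∈ A.domain, P a u ∈ A.domain)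
    (hPAcausal : ∀ (a : ℝ) (u : K) (hu : u ∈ A.domain),
      P a (A ⟨u, hu⟩) = P a (A ⟨P a u, hPAdom a u hu⟩))
    -- `𝓜` and `𝓝` are causal
    (hMcausal : ∀ (a : ℝ) (u : K), P a (Mc u) = P a (Mc (P a u)))
    (hNcausal : ∀ (a : ℝ) (u : K), P a (N u) = P a (N (P a u)))
    -- positive definiteness of `∂₀𝓜 + 𝓝`
    (c : ℝ) (hc : 0 < c)
    (hpos : ∀ (a : ℝ) (u : K) (hu : u ∈ D₀.domain),
      c * ‖P a u‖ ^ 2 ≤ (inner ℂ (D₀ ⟨Mc u, hMdom u hu⟩ + N u) (P a u) : ℂ).re) :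
    (B0 D₀ A Mc N hMdom).IsClosable ∧
    Function.Bijective (fun u : (B0 D₀ A Mc N hMdom).closure.domain =>
      (B0 D₀ A Mc N hMdom).closure u) ∧
    (∃ C : ℝ, 0 ≤ C ∧ ∀ u : (B0 D₀ A Mc N hMdom).closure.domain,
      ‖(u : K)‖ ≤ C * ‖(B0 D₀ A Mc N hMdom).closure u‖) ∧
    -- causality of the solution operator `B⁻¹`
    (∀ (a : ℝ) (u : (B0 D₀ A Mc N hMdom).closure.domain),
      P a ((B0 D₀ A Mc N hMdom).closure u) = 0 → P a (u : K) = 0) := by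
  classical
  have hcc : ∀ x y : K, (inner ℂ x y : ℂ) = @inner ℂ K _ x y := fun _ _ => rfl
  set Radj : ℝ → K →L[ℂ] K := fun ε => ContinuousLinearMap.adjoint (R ε) with hRadj
  set B₀ : K →ₗ.[ℂ] K := B0 D₀ A Mc N hMdom with hB₀def
  -- membership helpers
  have hmem1 : ∀ u : B₀.domain, (u:K) ∈ D₀.domain := fun u => u.2.1
  have hmem2 : ∀ u : B₀.domain, (u:K) ∈ A.domain := fun u => u.2.2
  have hB₀app : ∀ u : B₀.domain, B₀ u
      = D₀ ⟨Mc u, hMdom _ (hmem1 u)⟩ + N u + A ⟨(u:K), hmem2 u⟩ := fun u => rfl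
  -- `x = R ε x + ε • D₀ (R ε x)`
  have hRfix : ∀ ε (hε : 0 < ε) (x : K),
      R ε x + ε • (D₀ ⟨R ε x, hRdom ε hε x⟩ : K) = x := by
    intro ε hε x
    rw [hRval ε hε x, smul_smul, mul_inv_cancel₀ (ne_of_gt hε), one_smul]
    abel
  -- `D₀` commutes with `R ε` on `D₀.domain`
  have hRD : ∀ ε (hε : 0 < ε) (z : D₀.domain),
      (D₀ ⟨R ε z, hRdom ε hε z⟩ : K) = R ε (D₀ z) := by
    intro ε hε z
    have h2 : R ε (z:K) + ε • R ε (D₀ z) = z := by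
      have h1 := hRinv ε hε z
      rw [map_add, real_smul_coe, map_smul, ← real_smul_coe] at h1
      exact h1
    rw [hRval ε hε (z:K)]
    have h3 : ε • R ε (D₀ z) = (z:K) - R ε (z:K) := eq_sub_of_add_eq' h2
    rw [← h3, smul_smul, inv_mul_cancel₀ (ne_of_gt hε), one_smul]
  -- untruncated positivity
  have hpos' : ∀ (u:K) (hu : u ∈ D₀.domain),
      c * ‖u‖^2 ≤ (inner ℂ ((D₀ ⟨Mc u, hMdom u hu⟩ : K) + N u) u : ℂ).re := by
    intro u hu
    have h1 : Tendsto (fun a : ℝ => c * ‖P a u‖^2) atTop (nhds (c * ‖u‖^2)) :=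
      (((hPtendsto u).norm).pow 2).const_mul c
    have h2 : Tendsto (fun a : ℝ =>
        (inner ℂ ((D₀ ⟨Mc u, hMdom u hu⟩ : K) + N u) (P a u) : ℂ).re) atTop
        (nhds ((inner ℂ ((D₀ ⟨Mc u, hMdom u hu⟩ : K) + N u) u : ℂ).re)) :=
      (Complex.continuous_re.tendsto _).comp
        (Filter.Tendsto.inner tendsto_const_nhds (hPtendsto u))
    exact le_of_tendsto_of_tendsto' h1 h2 (fun a => hpos a u hu)
  -- the resolvent of `A` at `t = 1`
  have hAmax' : ∀ y : K, ∃ u : A.domain, (u:K) + (1:ℝ) • A u = y := by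
    intro y; obtain ⟨u, hu⟩ := hAmax y; exact ⟨u, by rwa [one_smul]⟩
  obtain ⟨J, hJn, hJl', hJr'⟩ := aux_resolvent hAmono one_pos hAmax'
  have hJl : ∀ u : A.domain, J ((u:K) + A u) = u := by
    intro u; have := hJl' u; rwa [one_smul] at this
  have hJr : ∀ y : K, ∃ u : A.domain, ((u : K) = J y ∧ (u : K) + A u = y) := by
    intro y; obtain ⟨u, h1, h2⟩ := hJr' y; rw [one_smul] at h2; exact ⟨u, h1, h2⟩
  have hJA : ∀ u : A.domain, J (A u) = (u:K) - J u := by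
    intro u
    calc J (A u) = J (((u:K) + A u) - u) := by congr 1; abel
    _ = J ((u:K) + A u) - J u := map_sub _ _ _
    _ = (u:K) - J u := by rw [hJl]
  have hJzero : ∀ x : K, J x = 0 → x = 0 := by
    intro x hx
    obtain ⟨u, hu1, hu2⟩ := hJr x
    have hu0 : u = 0 := by
      rwa [hx, Submodule.coe_eq_zero] at hu1
    rw [← hu2, hu0]
    simp
  -- formal adjoint pairing for `D₀`
  have hpair : ∀ (v : K) (hv : v ∈ D₀.adjoint.domain) (z : D₀.domain),
      (inner ℂ (D₀.adjoint ⟨v, hv⟩ : K) (z:K) : ℂ) = inner ℂ v (D₀ z : K) :=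
    fun v hv z => LinearPMap.adjoint_isFormalAdjoint hD₀dense ⟨v, hv⟩ z
  have hpair' : ∀ (v : K) (hv : v ∈ D₀.adjoint.domain) (z : D₀.domain),
      (inner ℂ (D₀ z : K) v : ℂ) = inner ℂ (z:K) (D₀.adjoint ⟨v, hv⟩ : K) := by
    intro v hv z
    rw [← inner_conj_symm, ← hpair v hv z, inner_conj_symm]
  -- test vectors give closability
  have htest : ∀ ε (hε : 0 < ε) (x0 : K), ∃ gv : K, ∀ u : B₀.domain,
      (inner ℂ (B₀ u : K) (Radj ε (ContinuousLinearMap.adjoint J x0)) : ℂ)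
        = inner ℂ (u:K) gv := by
    intro ε hε x0
    set Jx := ContinuousLinearMap.adjoint J x0 with hJx
    set v := Radj ε Jx with hv
    have hvdom : v ∈ D₀.adjoint.domain := hRadjdom ε hε Jx
    set dv : K := D₀.adjoint ⟨v, hvdom⟩ with hdv
    refine ⟨ContinuousLinearMap.adjoint Mc dv + ContinuousLinearMap.adjoint N v
      + Radj ε (x0 - Jx), ?_⟩
    intro u
    have e1 : (inner ℂ (D₀ ⟨Mc u, hMdom _ (hmem1 u)⟩ : K) v : ℂ)
        = inner ℂ (u:K) (ContinuousLinearMap.adjoint Mc dv) := by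
      rw [hpair' v hvdom ⟨Mc u, hMdom _ (hmem1 u)⟩]
      exact (ContinuousLinearMap.adjoint_inner_right Mc _ _).symm
    have e2 : (inner ℂ (N (u:K)) v : ℂ) = inner ℂ (u:K) (ContinuousLinearMap.adjoint N v) :=
      (ContinuousLinearMap.adjoint_inner_right N _ _).symm
    have e3 : (inner ℂ (A ⟨(u:K), hmem2 u⟩ : K) v : ℂ) = inner ℂ (u:K) (Radj ε (x0 - Jx)) := by
      have h1 : (inner ℂ (A ⟨(u:K), hmem2 u⟩ : K) v : ℂ)
          = inner ℂ (R ε (A ⟨(u:K), hmem2 u⟩ : K)) Jx := by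
        rw [hv, hRadj]
        exact ContinuousLinearMap.adjoint_inner_right (R ε) _ _
      rw [h1, ← hARcomm ε hε ⟨(u:K), hmem2 u⟩, hJx,
        ContinuousLinearMap.adjoint_inner_right J,
        hJA ⟨R ε (u:K), hARdom ε hε _ (hmem2 u)⟩]
      rw [inner_sub_left, map_sub, inner_sub_right]
      congr 1
      · rw [hRadj]
        exact (ContinuousLinearMap.adjoint_inner_right (R ε) _ _).symm
      · rw [hRadj, ContinuousLinearMap.adjoint_inner_right (R ε),
          ContinuousLinearMap.adjoint_inner_right J]
    rw [hB₀app u, inner_add_left, inner_add_left, e1, e2, e3,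
      ← inner_add_right, ← inner_add_right]
  have hclosable : B₀.IsClosable := by
    have hgr : ∀ x : K × K, x ∈ B₀.graph.topologicalClosure → x.fst = 0 → x.snd = 0 := by
      intro p hp hp1
      have hp' : p ∈ closure (B₀.graph : Set (K × K)) := by
        rw [← Submodule.topologicalClosure_coe]; exact hp
      obtain ⟨f, hfmem, hftend⟩ := mem_closure_iff_seq_limit.mp hp'
      have hself : ∀ (v gv : K), (∀ u : B₀.domain, (inner ℂ (B₀ u : K) v : ℂ) = inner ℂ (u:K) gv) →
          (inner ℂ p.2 v : ℂ) = 0 := by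
        intro v gv hv
        have h1 : Tendsto (fun n => (inner ℂ (f n).2 v : ℂ)) atTop (nhds (inner ℂ p.2 v : ℂ)) :=
          Filter.Tendsto.inner ((continuous_snd.tendsto p).comp hftend) tendsto_const_nhds
        have h2 : ∀ n, (inner ℂ (f n).2 v : ℂ) = inner ℂ (f n).1 gv := by
          intro n
          obtain ⟨u, hu1, hu2⟩ := (LinearPMap.mem_graph_iff _).mp (hfmem n)
          rw [← hu1, ← hu2]; exact hv u
        have h3 : Tendsto (fun n => (inner ℂ (f n).1 gv : ℂ)) atTop (nhds (inner ℂ p.1 gv : ℂ)) :=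
          Filter.Tendsto.inner ((continuous_fst.tendsto p).comp hftend) tendsto_const_nhds
        have h4 := tendsto_nhds_unique ((h1.congr (fun n => h2 n))) h3
        rw [h4, hp1, inner_zero_left]
      have h5 : ∀ ε (hε : 0 < ε) (x0 : K),
          (inner ℂ p.2 (Radj ε (ContinuousLinearMap.adjoint J x0)) : ℂ) = 0 := by
        intro ε hε x0
        obtain ⟨gv, hgv⟩ := htest ε hε x0
        exact hself _ gv hgv
      haveI : (nhdsWithin (0:ℝ) (Set.Ioi 0)).NeBot := nhdsGT_neBot 0
      have h6 : ∀ x0 : K, (inner ℂ p.2 (ContinuousLinearMap.adjoint J x0) : ℂ) = 0 := by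
        intro x0
        have h7 : Tendsto (fun ε => (inner ℂ p.2 (Radj ε (ContinuousLinearMap.adjoint J x0)) : ℂ))
            (nhdsWithin 0 (Set.Ioi 0))
            (nhds (inner ℂ p.2 (ContinuousLinearMap.adjoint J x0) : ℂ)) :=
          Filter.Tendsto.inner tendsto_const_nhds (hRadjtendsto _)
        refine tendsto_nhds_unique h7 ?_
        refine Tendsto.congr' ?_ (tendsto_const_nhds (α := ℝ))
        filter_upwards [self_mem_nhdsWithin] with ε hε
        exact (h5 ε hε x0).symm
      have h10 : J p.2 = 0 := by
        have h11 := h6 (J p.2)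
        rw [ContinuousLinearMap.adjoint_inner_right J] at h11
        exact inner_self_eq_zero.mp h11
      exact hJzero _ h10
    exact ⟨B₀.graph.topologicalClosure.toLinearPMap,
      (Submodule.toLinearPMap_graph_eq _ hgr).symm⟩
  set B : K →ₗ.[ℂ] K := B₀.closure with hBdef
  have hBgraph : B.graph = B₀.graph.topologicalClosure :=
    hclosable.graph_closure_eq_closure_graph.symm
  -- coercivity inequalities for the closure
  have hkeyB : ∀ u : B.domain,
      (c * ‖(u:K)‖^2 ≤ (inner ℂ (B u : K) (u:K) : ℂ).re) ∧
      (∀ a : ℝ, c * ‖P a u‖^2 ≤ (inner ℂ (B u : K) (P a u) : ℂ).re) := by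
    have hPP : ∀ (a : ℝ) (x : K), P a (P a x) = P a x := by
      intro a x
      conv_rhs => rw [← hPidem a]
      rfl
    have hPsa' : ∀ (a : ℝ) (x y : K), (inner ℂ x (P a y) : ℂ) = inner ℂ (P a x) y := by
      intro a x y
      conv_lhs => rw [← (hPsa a).adjoint_eq]
      exact ContinuousLinearMap.adjoint_inner_right _ _ _
    have hA_pos_trunc : ∀ (a : ℝ) (z : K) (hz : z ∈ A.domain),
        0 ≤ (inner ℂ (A ⟨z, hz⟩ : K) (P a z) : ℂ).re := by
      intro a z hz
      have h1 : (inner ℂ (A ⟨z, hz⟩ : K) (P a z) : ℂ)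
          = inner ℂ (A ⟨P a z, hPAdom a z hz⟩ : K) (P a z) := by
        calc (inner ℂ (A ⟨z, hz⟩ : K) (P a z) : ℂ)
            = inner ℂ (A ⟨z, hz⟩ : K) (P a (P a z)) := by rw [hPP a z]
          _ = inner ℂ (P a (A ⟨z, hz⟩ : K)) (P a z) := hPsa' a _ _
          _ = inner ℂ (P a (A ⟨P a z, hPAdom a z hz⟩ : K)) (P a z) := by rw [hPAcausal a z hz]
          _ = inner ℂ (A ⟨P a z, hPAdom a z hz⟩ : K) (P a (P a z)) := (hPsa' a _ _).symm
          _ = _ := by rw [hPP a z]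
      rw [h1]
      exact hAmono ⟨P a z, hPAdom a z hz⟩
    set SetS : Set (K × K) := {p | c * ‖p.1‖^2 ≤ (inner ℂ p.2 p.1 : ℂ).re} ∩
      ⋂ a : ℝ, {p | c * ‖P a p.1‖^2 ≤ (inner ℂ p.2 (P a p.1) : ℂ).re} with hSetS
    have hSclosed : IsClosed SetS := by
      apply IsClosed.inter
      · apply isClosed_le
        · exact continuous_const.mul ((continuous_fst.norm).pow 2)
        · exact Complex.continuous_re.comp (continuous_snd.inner continuous_fst)
      · apply isClosed_iInter
        intro a
        apply isClosed_le
        · exact continuous_const.mul ((((P a).continuous.comp continuous_fst).norm).pow 2)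
        · exact Complex.continuous_re.comp
            (continuous_snd.inner ((P a).continuous.comp continuous_fst))
    have hsub : (B₀.graph : Set (K × K)) ⊆ SetS := by
      rintro p hp
      obtain ⟨w, hw1, hw2⟩ := (LinearPMap.mem_graph_iff _).mp hp
      simp only [hSetS, Set.mem_inter_iff, Set.mem_setOf_eq, Set.mem_iInter]
      constructor
      · rw [← hw1, ← hw2, hB₀app w, inner_add_left, Complex.add_re]
        have t1 := hpos' (w:K) (hmem1 w)
        have t2 := hAmono ⟨(w:K), hmem2 w⟩
        linarith
      · intro a
        rw [← hw1, ← hw2, hB₀app w, inner_add_left, Complex.add_re]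
        have t1 := hpos a (w:K) (hmem1 w)
        have t2 := hA_pos_trunc a (w:K) (hmem2 w)
        linarith
    have hclosSetS : (B.graph : Set (K × K)) ⊆ SetS := by
      rw [hBgraph, Submodule.topologicalClosure_coe]
      calc closure (B₀.graph : Set (K × K)) ⊆ closure SetS := closure_mono hsub
      _ = SetS := hSclosed.closure_eq
    intro u
    have humem := hclosSetS (B.mem_graph u)
    simp only [hSetS, Set.mem_inter_iff, Set.mem_setOf_eq, Set.mem_iInter] at humem
    exact humem
  -- norm bound
  have hBbound : ∀ u : B.domain, ‖(u:K)‖ ≤ c⁻¹ * ‖(B u : K)‖ := by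
    intro u
    have h1 := (hkeyB u).1
    have h2 := cre_inner_le (B u : K) (u:K)
    rcases eq_or_lt_of_le (norm_nonneg (u:K)) with h3 | h3
    · rw [← h3]; positivity
    · rw [le_inv_mul_iff₀ hc]
      nlinarith
  -- injectivity
  have hinj : Function.Injective (fun u : B.domain => (B u : K)) := by
    intro u₁ u₂ h12
    have h1 : (B (u₁ - u₂) : K) = 0 := by
      rw [LinearPMap.map_sub]
      simpa [sub_eq_zero] using h12
    have h2 := hBbound (u₁ - u₂)
    rw [h1, norm_zero, mul_zero, norm_le_zero_iff] at h2
    have : ((u₁ - u₂ : B.domain) : K) = 0 := h2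
    rw [AddSubgroupClass.coe_sub, sub_eq_zero] at this
    exact Subtype.coe_injective this
  -- surjectivity
  have hRadjapp : ∀ (ε : ℝ) (x : K), Radj ε x = ContinuousLinearMap.adjoint (R ε) x :=
    fun _ _ => rfl
  have hker : ∀ v : K, (∀ u : B₀.domain, (inner ℂ (B₀ u : K) v : ℂ) = 0) → v = 0 := by
    intro v h0
    haveI : (nhdsWithin (0:ℝ) (Set.Ioi 0)).NeBot := nhdsGT_neBot 0
    set hvec : K := ContinuousLinearMap.adjoint Mop v - ContinuousLinearMap.adjoint N v with hhvec
    have hmain : ∀ ε (hε : 0 < ε),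
        c * ‖Radj ε v‖^2 ≤ (inner ℂ (Radj ε hvec) (Radj ε v) : ℂ).re
          - (inner ℂ (Radj ε (ContinuousLinearMap.adjoint Mop (Radj ε v))) (Radj ε v) : ℂ).re
          + (inner ℂ (N (Radj ε v)) (Radj ε v) : ℂ).re := by
      intro ε hε
      set y : K := Radj ε v with hy
      have hymem' : y ∈ D₀.adjoint.domain := hRadjdom ε hε v
      have hymem : y ∈ D₀.domain := hadjdom ▸ hymem'
      set w : K := Radj ε (ContinuousLinearMap.adjoint Mc v) with hw
      have hwmem' : w ∈ D₀.adjoint.domain := hRadjdom ε hε _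
      set s : K := ε⁻¹ • (ContinuousLinearMap.adjoint Mc v - w) with hs
      have hsval : (D₀.adjoint ⟨w, hwmem'⟩ : K) = s := hRadjval ε hε _
      set q : K := Radj ε hvec - s with hq
      have c1 : ∀ z : B₀.domain, (inner ℂ (A ⟨(z:K), hmem2 z⟩ : K) y : ℂ) = inner ℂ (z:K) q := by
        intro z
        have hm1 : R ε (z:K) ∈ D₀.domain := hRdom ε hε (z:K)
        have hm2 : R ε (z:K) ∈ A.domain := hARdom ε hε (z:K) (hmem2 z)
        have hmB : R ε (z:K) ∈ B₀.domain := Submodule.mem_inf.mpr ⟨hm1, hm2⟩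
        have hz0 : (inner ℂ ((D₀ ⟨Mc (R ε (z:K)), hMdom _ hm1⟩ : K) + N (R ε (z:K))
            + (A ⟨R ε (z:K), hm2⟩ : K)) v : ℂ) = 0 := by
          have hz := h0 ⟨R ε (z:K), hmB⟩
          rw [hB₀app ⟨R ε (z:K), hmB⟩] at hz
          exact hz
        have hDpart : (D₀ ⟨Mc (R ε (z:K)), hMdom _ hm1⟩ : K)
            = Mc (R ε ((D₀ ⟨(z:K), hmem1 z⟩ : K))) - Mop (R ε (z:K)) := by
          have h1 : (D₀ ⟨R ε (z:K), hm1⟩ : K) = R ε ((D₀ ⟨(z:K), hmem1 z⟩ : K)) :=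
            hRD ε hε ⟨(z:K), hmem1 z⟩
          have h2 : Mc ((D₀ ⟨R ε (z:K), hm1⟩ : K))
              = (D₀ ⟨Mc (R ε (z:K)), hMdom _ hm1⟩ : K) + Mop (R ε (z:K)) :=
            hMcomm ⟨R ε (z:K), hm1⟩
          rw [h1] at h2
          rw [eq_sub_iff_add_eq]
          exact h2.symm
        have hApart : (A ⟨R ε (z:K), hm2⟩ : K) = R ε (A ⟨(z:K), hmem2 z⟩ : K) :=
          hARcomm ε hε ⟨(z:K), hmem2 z⟩
        rw [hDpart, hApart] at hz0
        rw [inner_add_left, inner_add_left, inner_sub_left] at hz0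
        have t1 : (inner ℂ (Mc (R ε ((D₀ ⟨(z:K), hmem1 z⟩ : K)))) v : ℂ) = inner ℂ ((z:K)) s := by
          calc (inner ℂ (Mc (R ε ((D₀ ⟨(z:K), hmem1 z⟩ : K)))) v : ℂ)
              = inner ℂ (R ε ((D₀ ⟨(z:K), hmem1 z⟩ : K))) (ContinuousLinearMap.adjoint Mc v) := by
                rw [← ContinuousLinearMap.adjoint_inner_right Mc]
          _ = inner ℂ ((D₀ ⟨(z:K), hmem1 z⟩ : K)) w := by
                rw [hw, hRadjapp, ← ContinuousLinearMap.adjoint_inner_right (R ε)]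
          _ = inner ℂ ((z:K)) (D₀.adjoint ⟨w, hwmem'⟩ : K) := hpair' w hwmem' ⟨(z:K), hmem1 z⟩
          _ = inner ℂ ((z:K)) s := by rw [hsval]
        have t2 : (inner ℂ (Mop (R ε (z:K))) v : ℂ)
            = inner ℂ ((z:K)) (Radj ε (ContinuousLinearMap.adjoint Mop v)) := by
          rw [hRadjapp, ← ContinuousLinearMap.adjoint_inner_right Mop,
            ← ContinuousLinearMap.adjoint_inner_right (R ε)]
        have t3 : (inner ℂ (N (R ε (z:K))) v : ℂ)
            = inner ℂ ((z:K)) (Radj ε (ContinuousLinearMap.adjoint N v)) := by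
          rw [hRadjapp, ← ContinuousLinearMap.adjoint_inner_right N,
            ← ContinuousLinearMap.adjoint_inner_right (R ε)]
        have t4 : (inner ℂ (R ε (A ⟨(z:K), hmem2 z⟩ : K)) v : ℂ)
            = inner ℂ (A ⟨(z:K), hmem2 z⟩ : K) y := by
          rw [hy, hRadjapp, ← ContinuousLinearMap.adjoint_inner_right (R ε)]
        rw [t1, t2, t3, t4] at hz0
        have hfin : (inner ℂ (A ⟨(z:K), hmem2 z⟩ : K) y : ℂ)
            = inner ℂ (z:K) (Radj ε hvec) - inner ℂ ((z:K)) s := by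
          rw [hhvec, hRadjapp, map_sub, inner_sub_right]
          rw [← hRadjapp ε (ContinuousLinearMap.adjoint Mop v),
            ← hRadjapp ε (ContinuousLinearMap.adjoint N v)]
          linear_combination hz0
        rw [hfin, hq, inner_sub_right]
      have c2 : ∀ z : A.domain, (inner ℂ (A z : K) y : ℂ) = inner ℂ (z:K) q := by
        intro z
        have hfun : ∀ δ (hδ : (0:ℝ) < δ),
            (inner ℂ (R δ (A z : K)) y : ℂ) = inner ℂ (R δ (z:K)) q := by
          intro δ hδ
          have hc1 := c1 ⟨R δ (z:K), Submodule.mem_inf.mpr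
            ⟨hRdom δ hδ (z:K), hARdom δ hδ (z:K) z.2⟩⟩
          rw [show (A ⟨R δ (z:K), _⟩ : K) = R δ (A z : K) from hARcomm δ hδ z] at hc1
          exact hc1
        have e1 : Tendsto (fun δ => (inner ℂ (R δ (A z : K)) y : ℂ))
            (nhdsWithin 0 (Set.Ioi 0)) (nhds (inner ℂ (A z : K) y : ℂ)) :=
          Filter.Tendsto.inner (hRtendsto _) tendsto_const_nhds
        have e2 : Tendsto (fun δ => (inner ℂ (R δ (z:K)) q : ℂ))
            (nhdsWithin 0 (Set.Ioi 0)) (nhds (inner ℂ (z:K) q : ℂ)) :=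
          Filter.Tendsto.inner (hRtendsto _) tendsto_const_nhds
        refine tendsto_nhds_unique (e1.congr' ?_) e2
        filter_upwards [self_mem_nhdsWithin] with δ hδ
        exact hfun δ hδ
      have c3 : 0 ≤ (inner ℂ q y : ℂ).re := aux_adjoint_monotone hAmono hAmax y q c2
      set dd : K := (D₀.adjoint ⟨y, hymem'⟩ : K) with hdd
      have hMR : ∀ x : K, R ε (Mc x) = Mc (R ε x) + ε • R ε (Mop (R ε x)) := by
        intro x
        have hx : R ε x + ε • (D₀ ⟨R ε x, hRdom ε hε x⟩ : K) = x := hRfix ε hε x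
        have hmc := hMcomm ⟨R ε x, hRdom ε hε x⟩
        have h1 : Mc x = (Mc (R ε x) + ε • (D₀ ⟨Mc (R ε x), hMdom _ (hRdom ε hε x)⟩ : K))
            + ε • Mop (R ε x) := by
          calc Mc x = Mc (R ε x + ε • (D₀ ⟨R ε x, hRdom ε hε x⟩ : K)) := by rw [hx]
          _ = Mc (R ε x) + ε • Mc (D₀ ⟨R ε x, hRdom ε hε x⟩ : K) := by
              rw [map_add, real_smul_coe, map_smul, real_smul_coe]
          _ = _ := by
              rw [hmc, smul_add]
              abel
        have h2 : R ε (Mc (R ε x) + ε • (D₀ ⟨Mc (R ε x), hMdom _ (hRdom ε hε x)⟩ : K))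
            = Mc (R ε x) := hRinv ε hε ⟨Mc (R ε x), hMdom _ (hRdom ε hε x)⟩
        have hsm2 : R ε (ε • Mop (R ε x)) = ε • R ε (Mop (R ε x)) := by
          rw [real_smul_coe, map_smul, ← real_smul_coe]
        rw [h1, map_add, h2, hsm2]
      have hwMc : w = ContinuousLinearMap.adjoint Mc y
          - ε • Radj ε (ContinuousLinearMap.adjoint Mop y) := by
        apply ext_inner_left ℂ
        intro x
        have l1 : (inner ℂ x w : ℂ) = inner ℂ (Mc (R ε x)) v := by
          rw [hw, hRadjapp, ContinuousLinearMap.adjoint_inner_right (R ε),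
            ContinuousLinearMap.adjoint_inner_right Mc]
        have l2 : (inner ℂ x (ContinuousLinearMap.adjoint Mc y) : ℂ) = inner ℂ (R ε (Mc x)) v := by
          rw [ContinuousLinearMap.adjoint_inner_right Mc, hy, hRadjapp,
            ContinuousLinearMap.adjoint_inner_right (R ε)]
        have l3 : (inner ℂ x (Radj ε (ContinuousLinearMap.adjoint Mop y)) : ℂ)
            = inner ℂ (R ε (Mop (R ε x))) v := by
          rw [hRadjapp, ContinuousLinearMap.adjoint_inner_right (R ε),
            ContinuousLinearMap.adjoint_inner_right Mop, hy, hRadjapp,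
            ContinuousLinearMap.adjoint_inner_right (R ε)]
        rw [inner_sub_right, l1, l2, real_smul_inner_right, l3]
        rw [hMR x, inner_add_left, real_smul_inner_left]
        ring
      have c4 : s = ContinuousLinearMap.adjoint Mc dd
          + Radj ε (ContinuousLinearMap.adjoint Mop y) := by
        have hddval : dd = ε⁻¹ • (v - y) := hRadjval ε hε v
        have hvy : v - y = ε • dd := by
          rw [hddval, smul_smul, mul_inv_cancel₀ (ne_of_gt hε), one_smul]
        rw [hs, hwMc]
        have hrearr : ContinuousLinearMap.adjoint Mc v - (ContinuousLinearMap.adjoint Mc y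
            - ε • Radj ε (ContinuousLinearMap.adjoint Mop y))
            = ContinuousLinearMap.adjoint Mc (v - y)
              + ε • Radj ε (ContinuousLinearMap.adjoint Mop y) := by
          rw [map_sub]; abel
        rw [hrearr, hvy]
        have hsm : ContinuousLinearMap.adjoint Mc (ε • dd)
            = ε • ContinuousLinearMap.adjoint Mc dd := by
          rw [real_smul_coe, map_smul, ← real_smul_coe]
        rw [hsm, smul_add, smul_smul, inv_mul_cancel₀ (ne_of_gt hε), one_smul, smul_smul,
          inv_mul_cancel₀ (ne_of_gt hε), one_smul]
      have c5 : (inner ℂ (ContinuousLinearMap.adjoint Mc dd) y : ℂ).re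
          = (inner ℂ (D₀ ⟨Mc y, hMdom y hymem⟩ : K) y : ℂ).re := by
        have l1 : (inner ℂ (ContinuousLinearMap.adjoint Mc dd) y : ℂ) = inner ℂ dd (Mc y) :=
          ContinuousLinearMap.adjoint_inner_left Mc y dd
        have l2 : (inner ℂ dd (Mc y) : ℂ) = inner ℂ y (D₀ ⟨Mc y, hMdom y hymem⟩ : K) := by
          rw [hdd]
          exact hpair y hymem' ⟨Mc y, hMdom y hymem⟩
        rw [l1, l2, cre_symm]
      have c6 := hpos' y hymem
      rw [inner_add_left, Complex.add_re] at c6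
      have c7 : (inner ℂ s y : ℂ).re = (inner ℂ (D₀ ⟨Mc y, hMdom y hymem⟩ : K) y : ℂ).re
          + (inner ℂ (Radj ε (ContinuousLinearMap.adjoint Mop y)) y : ℂ).re := by
        rw [c4, inner_add_left, Complex.add_re, c5]
      have c8 : (inner ℂ s y : ℂ).re ≤ (inner ℂ (Radj ε hvec) y : ℂ).re := by
        have e : (inner ℂ q y : ℂ).re = (inner ℂ (Radj ε hvec) y : ℂ).re - (inner ℂ s y : ℂ).re := by
          rw [hq, inner_sub_left, Complex.sub_re]
        linarith
      linarith
    -- pass to the limit ε → 0⁺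
    have hylim : Tendsto (fun ε => Radj ε v) (nhdsWithin 0 (Set.Ioi 0)) (nhds v) :=
      hRadjtendsto v
    have hL1 : Tendsto (fun ε => c * ‖Radj ε v‖^2) (nhdsWithin 0 (Set.Ioi 0))
        (nhds (c * ‖v‖^2)) := ((hylim.norm).pow 2).const_mul c
    have hmid : Tendsto (fun ε => Radj ε (ContinuousLinearMap.adjoint Mop (Radj ε v)))
        (nhdsWithin 0 (Set.Ioi 0)) (nhds (ContinuousLinearMap.adjoint Mop v)) := by
      rw [tendsto_iff_norm_sub_tendsto_zero]
      apply squeeze_zero' (g := fun ε => ‖ContinuousLinearMap.adjoint Mop‖ * ‖Radj ε v - v‖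
        + ‖Radj ε (ContinuousLinearMap.adjoint Mop v) - ContinuousLinearMap.adjoint Mop v‖)
      · filter_upwards with ε using norm_nonneg _
      · filter_upwards [self_mem_nhdsWithin] with ε hε
        have hRn : ∀ x : K, ‖Radj ε x‖ ≤ ‖x‖ := by
          intro x
          calc ‖Radj ε x‖ ≤ ‖ContinuousLinearMap.adjoint (R ε)‖ * ‖x‖ :=
                (ContinuousLinearMap.adjoint (R ε)).le_opNorm x
          _ ≤ 1 * ‖x‖ := by
              apply mul_le_mul_of_nonneg_right _ (norm_nonneg x)
              rw [LinearIsometryEquiv.norm_map ContinuousLinearMap.adjoint (R ε)]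
              exact hRnorm ε hε
          _ = ‖x‖ := one_mul _
        calc ‖Radj ε (ContinuousLinearMap.adjoint Mop (Radj ε v))
              - ContinuousLinearMap.adjoint Mop v‖
            ≤ ‖Radj ε (ContinuousLinearMap.adjoint Mop (Radj ε v))
                - Radj ε (ContinuousLinearMap.adjoint Mop v)‖
              + ‖Radj ε (ContinuousLinearMap.adjoint Mop v)
                - ContinuousLinearMap.adjoint Mop v‖ := by
              rw [← dist_eq_norm, ← dist_eq_norm, ← dist_eq_norm]
              exact dist_triangle _ _ _
        _ ≤ ‖ContinuousLinearMap.adjoint Mop‖ * ‖Radj ε v - v‖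
              + ‖Radj ε (ContinuousLinearMap.adjoint Mop v)
                - ContinuousLinearMap.adjoint Mop v‖ := by
              gcongr
              calc ‖Radj ε (ContinuousLinearMap.adjoint Mop (Radj ε v))
                    - Radj ε (ContinuousLinearMap.adjoint Mop v)‖
                  = ‖Radj ε (ContinuousLinearMap.adjoint Mop (Radj ε v)
                      - ContinuousLinearMap.adjoint Mop v)‖ := by rw [map_sub]
              _ ≤ ‖ContinuousLinearMap.adjoint Mop (Radj ε v)
                    - ContinuousLinearMap.adjoint Mop v‖ := hRn _
              _ = ‖ContinuousLinearMap.adjoint Mop (Radj ε v - v)‖ := by rw [map_sub]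
              _ ≤ ‖ContinuousLinearMap.adjoint Mop‖ * ‖Radj ε v - v‖ :=
                  (ContinuousLinearMap.adjoint Mop).le_opNorm _
      · have g1 : Tendsto (fun ε => ‖Radj ε v - v‖) (nhdsWithin 0 (Set.Ioi 0)) (nhds 0) := by
          have := (hylim.sub (tendsto_const_nhds (x := v))).norm
          simpa using this
        have g2 : Tendsto (fun ε => ‖Radj ε (ContinuousLinearMap.adjoint Mop v)
            - ContinuousLinearMap.adjoint Mop v‖) (nhdsWithin 0 (Set.Ioi 0)) (nhds 0) := by
          have := ((hRadjtendsto (ContinuousLinearMap.adjoint Mop v)).sub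
            (tendsto_const_nhds (x := ContinuousLinearMap.adjoint Mop v))).norm
          simpa using this
        have := (g1.const_mul ‖ContinuousLinearMap.adjoint Mop‖).add g2
        simpa using this
    have hR1 : Tendsto (fun ε => (inner ℂ (Radj ε hvec) (Radj ε v) : ℂ).re)
        (nhdsWithin 0 (Set.Ioi 0)) (nhds ((inner ℂ hvec v : ℂ).re)) :=
      (Complex.continuous_re.tendsto _).comp (Filter.Tendsto.inner (hRadjtendsto hvec) hylim)
    have hR2 : Tendsto (fun ε =>
        (inner ℂ (Radj ε (ContinuousLinearMap.adjoint Mop (Radj ε v))) (Radj ε v) : ℂ).re)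
        (nhdsWithin 0 (Set.Ioi 0))
        (nhds ((inner ℂ (ContinuousLinearMap.adjoint Mop v) v : ℂ).re)) :=
      (Complex.continuous_re.tendsto _).comp (Filter.Tendsto.inner hmid hylim)
    have hR3 : Tendsto (fun ε => (inner ℂ (N (Radj ε v)) (Radj ε v) : ℂ).re)
        (nhdsWithin 0 (Set.Ioi 0)) (nhds ((inner ℂ (N v) v : ℂ).re)) :=
      (Complex.continuous_re.tendsto _).comp
        (Filter.Tendsto.inner ((N.continuous.tendsto v).comp hylim) hylim)
    have hfinal : c * ‖v‖^2 ≤ (inner ℂ hvec v : ℂ).re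
        - (inner ℂ (ContinuousLinearMap.adjoint Mop v) v : ℂ).re + (inner ℂ (N v) v : ℂ).re := by
      refine le_of_tendsto_of_tendsto hL1 ((hR1.sub hR2).add hR3) ?_
      filter_upwards [self_mem_nhdsWithin] with ε hε
      exact hmain ε hε
    have hzero : (inner ℂ hvec v : ℂ).re
        - (inner ℂ (ContinuousLinearMap.adjoint Mop v) v : ℂ).re + (inner ℂ (N v) v : ℂ).re = 0 := by
      rw [hhvec, inner_sub_left, Complex.sub_re]
      have hNN : (inner ℂ (ContinuousLinearMap.adjoint N v) v : ℂ).re = (inner ℂ (N v) v : ℂ).re := by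
        rw [ContinuousLinearMap.adjoint_inner_left N v v]
        exact cre_symm _ _
      linarith
    have h9 : ‖v‖^2 ≤ 0 := by nlinarith
    have h10 : ‖v‖^2 = 0 := le_antisymm h9 (sq_nonneg _)
    exact norm_eq_zero.mp (sq_eq_zero_iff.mp h10)
  have hsurj : Function.Surjective (fun u : B.domain => (B u : K)) := by
    set Ran : Submodule ℂ K := LinearMap.range B.toFun with hRan
    have hranmem : ∀ u : B.domain, (B u : K) ∈ Ran := fun u => ⟨u, rfl⟩
    have hbot : Ranᗮ = ⊥ := by
      rw [Submodule.eq_bot_iff]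
      intro v hv
      apply hker v
      intro u
      have hle := B₀.le_closure
      have humem : (u : K) ∈ B.domain := hle.1 u.2
      have heq : B₀ u = B ⟨(u:K), humem⟩ := hle.2 rfl
      rw [heq]
      exact (Submodule.mem_orthogonal Ran v).mp hv _ (hranmem _)
    have hdense : Ran.topologicalClosure = ⊤ :=
      Submodule.topologicalClosure_eq_top_iff.mpr hbot
    have hclosed : IsClosed (Ran : Set K) := by
      apply IsSeqClosed.isClosed
      intro g p hgmem hgtend
      choose w hw using hgmem
      have hgc : CauchySeq g := hgtend.cauchySeq
      have hwc : CauchySeq (fun n => (w n : K)) := by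
        rw [Metric.cauchySeq_iff]
        intro δ hδ
        obtain ⟨Nn, hNn⟩ := Metric.cauchySeq_iff.mp hgc (δ * c) (by positivity)
        refine ⟨Nn, fun m hm n hn => ?_⟩
        have h1 : dist ((w m : K)) ((w n : K)) ≤ c⁻¹ * dist (g m) (g n) := by
          rw [dist_eq_norm, dist_eq_norm]
          have h2 := hBbound (w m - w n)
          rw [LinearPMap.map_sub] at h2
          have h3 : ((w m - w n : B.domain) : K) = (w m : K) - (w n : K) := rfl
          rw [h3] at h2
          have h4 : (B (w m) : K) - (B (w n) : K) = g m - g n := by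
            rw [show (B (w m) : K) = g m from hw m, show (B (w n) : K) = g n from hw n]
          rw [h4] at h2
          exact h2
        calc dist ((w m : K)) ((w n : K)) ≤ c⁻¹ * dist (g m) (g n) := h1
        _ < c⁻¹ * (δ * c) := by
            exact mul_lt_mul_of_pos_left (hNn m hm n hn) (by positivity)
        _ = δ := by field_simp
      obtain ⟨uinf, huinf⟩ := cauchySeq_tendsto_of_complete hwc
      have hgraphmem : ∀ n, ((w n : K), g n) ∈ B.graph := by
        intro n
        have hmg := B.mem_graph (w n)
        rwa [show (B (w n) : K) = g n from hw n] at hmg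
      have hgraphclosed : IsClosed (B.graph : Set (K × K)) := by
        rw [hBgraph]
        exact Submodule.isClosed_topologicalClosure _
      have hlim : (uinf, p) ∈ B.graph := by
        apply hgraphclosed.mem_of_tendsto (huinf.prodMk_nhds hgtend)
        filter_upwards with n
        exact hgraphmem n
      obtain ⟨yy, hy1, hy2⟩ := (LinearPMap.mem_graph_iff _).mp hlim
      exact ⟨yy, hy2⟩
    intro p
    have hp : p ∈ Ran := by
      have h1 : p ∈ (Ran.topologicalClosure : Set K) := by rw [hdense]; trivial
      rw [Submodule.topologicalClosure_coe] at h1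
      rwa [hclosed.closure_eq] at h1
    obtain ⟨yy, hy⟩ := hp
    exact ⟨yy, hy⟩
  refine ⟨hclosable, ⟨hinj, hsurj⟩, ⟨c⁻¹, by positivity, hBbound⟩, ?_⟩
  -- causality
  intro a u hu
  have h1 := (hkeyB u).2 a
  have hPsa' : ∀ x y : K, (inner ℂ x (P a y) : ℂ) = inner ℂ (P a x) y := by
    intro x y
    conv_lhs => rw [← (hPsa a).adjoint_eq]
    exact ContinuousLinearMap.adjoint_inner_right _ _ _
  have h2 : (inner ℂ (B u : K) (P a (u:K)) : ℂ) = 0 := by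
    have hPP : P a (P a (u:K)) = P a (u:K) := by
      conv_rhs => rw [← hPidem a]
      rfl
    calc (inner ℂ (B u : K) (P a (u:K)) : ℂ) = inner ℂ (B u : K) (P a (P a (u:K))) := by rw [hPP]
    _ = inner ℂ (P a (B u : K)) (P a (u:K)) := hPsa' _ _
    _ = 0 := by rw [hu, inner_zero_left]
  rw [h2] at h1
  simp only [Complex.zero_re] at h1
  have h4 : ‖P a (u:K)‖^2 ≤ 0 := by nlinarith
  have h5 : ‖P a (u:K)‖^2 = 0 := le_antisymm h4 (sq_nonneg _)
  exact norm_eq_zero.mp (sq_eq_zero_iff.mp h5)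
end

section
/- Assume B₀ is closable and let B denote its closure. Then for every ε > 0 and every u ∈ dom(B): R_ε u ∈ dom(D₀) ∩ dom(A) and R_ε(Bu) = B₀(R_ε u) + ε·D₀(R_ε(M(R_ε u))) + (R_ε(𝓝u) − 𝓝(R_ε u)). Moreover, as ε → 0⁺, for every w ∈ K: ⟨ε·D₀(R_ε(M(R_ε u))), w⟩ → 0 and ⟨B₀(R_ε u), w⟩ → ⟨Bu, w⟩ (i.e., ε·D₀(R_ε(M(R_ε u))) converges weakly to 0 and B₀(R_ε u) converges weakly to Bu). -/
open Filter

theorem stmt11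
    {K : Type*} [NormedAddCommGroup K] [InnerProductSpace ℂ K] [CompleteSpace K]
    (D₀ : K →ₗ.[ℂ] K) (hD₀dense : Dense (D₀.domain : Set K)) (hD₀closed : D₀.IsClosed)
    (R : ℝ → K →L[ℂ] K)
    (hRdom : ∀ ε, 0 < ε → ∀ x : K, R ε x ∈ D₀.domain)
    (hRval : ∀ ε (hε : 0 < ε) (x : K),
      D₀ ⟨R ε x, hRdom ε hε x⟩ = ε⁻¹ • (x - R ε x))
    (hRinv : ∀ ε, 0 < ε → ∀ u : D₀.domain, R ε ((u : K) + ε • D₀ u) = u)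
    (hRnorm : ∀ ε, 0 < ε → ‖R ε‖ ≤ 1)
    (hRtendsto : ∀ x : K, Tendsto (fun ε => R ε x) (nhdsWithin 0 (Set.Ioi 0)) (nhds x))
    (hRadjdom : ∀ ε, 0 < ε → ∀ x : K,
      ContinuousLinearMap.adjoint (R ε) x ∈ D₀.adjoint.domain)
    (hRadjval : ∀ ε (hε : 0 < ε) (x : K),
      D₀.adjoint ⟨ContinuousLinearMap.adjoint (R ε) x, hRadjdom ε hε x⟩
        = ε⁻¹ • (x - ContinuousLinearMap.adjoint (R ε) x))
    (hRadjtendsto : ∀ x : K,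
      Tendsto (fun ε => ContinuousLinearMap.adjoint (R ε) x) (nhdsWithin 0 (Set.Ioi 0)) (nhds x))
    (Mc N Mop : K →L[ℂ] K)
    (hMdom : ∀ u ∈ D₀.domain, Mc u ∈ D₀.domain)
    (hMcomm : ∀ u : D₀.domain, Mc (D₀ u) = D₀ ⟨Mc u, hMdom u u.2⟩ + Mop u)
    (A : K →ₗ.[ℂ] K) (hAdense : Dense (A.domain : Set K)) (hAclosed : A.IsClosed)
    (hARdom : ∀ ε, 0 < ε → ∀ u ∈ A.domain, R ε u ∈ A.domain)
    (hARcomm : ∀ ε (hε : 0 < ε) (u : A.domain),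
      A ⟨R ε u, hARdom ε hε u u.2⟩ = R ε (A u))
    (hclosable : (B0 D₀ A Mc N hMdom).IsClosable) :
    ∃ hmem : ∀ (ε : ℝ), 0 < ε → ∀ u : (B0 D₀ A Mc N hMdom).closure.domain,
        R ε (u : K) ∈ D₀.domain ⊓ A.domain,
      (∀ (ε : ℝ) (hε : 0 < ε) (u : (B0 D₀ A Mc N hMdom).closure.domain),
        R ε ((B0 D₀ A Mc N hMdom).closure u)
          = B0 D₀ A Mc N hMdom ⟨R ε (u : K), hmem ε hε u⟩
            + (ε : ℂ) • D₀ ⟨R ε (Mop (R ε (u : K))), hRdom ε hε _⟩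
            + (R ε (N (u : K)) - N (R ε (u : K)))) ∧
      (∀ (u : (B0 D₀ A Mc N hMdom).closure.domain) (w : K),
        Tendsto (fun ε : ℝ => if hε : 0 < ε then
            (inner ℂ ((ε : ℂ) • D₀ ⟨R ε (Mop (R ε (u : K))), hRdom ε hε _⟩) w : ℂ) else 0)
          (nhdsWithin 0 (Set.Ioi 0)) (nhds 0)) ∧
      (∀ (u : (B0 D₀ A Mc N hMdom).closure.domain) (w : K),
        Tendsto (fun ε : ℝ => if hε : 0 < ε then
            (inner ℂ (B0 D₀ A Mc N hMdom ⟨R ε (u : K), hmem ε hε u⟩) w : ℂ) else 0)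
          (nhdsWithin 0 (Set.Ioi 0))
          (nhds (inner ℂ ((B0 D₀ A Mc N hMdom).closure u) w))) := by
  classical
  -- basic scalar helpers
  have hsm : ∀ (ε : ℝ), 0 < ε → ∀ z : K, ε • ε⁻¹ • z = z := by
    intro ε hε z; rw [smul_smul, mul_inv_cancel₀ hε.ne', one_smul]
  have hsm' : ∀ (ε : ℝ), 0 < ε → ∀ z : K, ε⁻¹ • ε • z = z := by
    intro ε hε z; rw [smul_smul, inv_mul_cancel₀ hε.ne', one_smul]
  -- proof-irrelevant versions of hypotheses
  have hval : ∀ ε (hε : 0 < ε) (x : K) (h : R ε x ∈ D₀.domain),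
      D₀ ⟨R ε x, h⟩ = ε⁻¹ • (x - R ε x) := fun ε hε x h => hRval ε hε x
  -- B0 application lemma
  have hB0app : ∀ (x : K) (hx : x ∈ D₀.domain ⊓ A.domain),
      B0 D₀ A Mc N hMdom ⟨x, hx⟩
        = D₀ ⟨Mc x, hMdom x (Submodule.mem_inf.mp hx).1⟩ + N x
          + A ⟨x, (Submodule.mem_inf.mp hx).2⟩ := fun x hx => rfl
  -- R ε commutes with D₀ on dom D₀
  have hRD : ∀ ε (hε : 0 < ε) (v : D₀.domain),
      R ε (D₀ v) = ε⁻¹ • ((v : K) - R ε (v : K)) := by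
    intro ε hε v
    have h1 : R ε ((v : K)) + ε • R ε (D₀ v) = (v : K) := by
      rw [← (R ε).map_smul_of_tower, ← map_add]; exact hRinv ε hε v
    have h2 : ε • R ε (D₀ v) = (v : K) - R ε (v : K) := by
      rw [eq_sub_iff_add_eq, add_comm]; exact h1
    rw [← hsm' ε hε (R ε (D₀ v)), h2]
  -- commutation of R with Mc
  have hMcR : ∀ ε (hε : 0 < ε) (x : K),
      R ε (Mc x) = Mc (R ε x) + ε • R ε (Mop (R ε x)) := by
    intro ε hε x
    have hx : R ε x + ε • (D₀ ⟨R ε x, hRdom ε hε x⟩) = x := by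
      rw [hRval ε hε x, hsm ε hε]; exact add_sub_cancel _ _
    have hMcx : Mc x = (Mc (R ε x) + ε • D₀ ⟨Mc (R ε x), hMdom _ (hRdom ε hε x)⟩)
        + ε • Mop (R ε x) := by
      conv_lhs => rw [← hx]
      rw [map_add, Mc.map_smul_of_tower, hMcomm ⟨R ε x, hRdom ε hε x⟩, smul_add, add_assoc]
    calc R ε (Mc x)
        = R ε ((Mc (R ε x) + ε • D₀ ⟨Mc (R ε x), hMdom _ (hRdom ε hε x)⟩))
          + ε • R ε (Mop (R ε x)) := by
          rw [← (R ε).map_smul_of_tower, ← map_add, ← hMcx]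
      _ = Mc (R ε x) + ε • R ε (Mop (R ε x)) := by
          rw [hRinv ε hε ⟨Mc (R ε x), hMdom _ (hRdom ε hε x)⟩]
  -- formula for D₀ (Mc (R ε x))
  have hDMc : ∀ ε (hε : 0 < ε) (x : K) (h : Mc (R ε x) ∈ D₀.domain),
      D₀ ⟨Mc (R ε x), h⟩ = ε⁻¹ • (Mc x - Mc (R ε x)) - Mop (R ε x) := by
    intro ε hε x h
    have hc := hMcomm ⟨R ε x, hRdom ε hε x⟩
    rw [hRval ε hε x, Mc.map_smul_of_tower, map_sub] at hc
    have hc' : ε⁻¹ • (Mc x - Mc (R ε x)) = D₀ ⟨Mc (R ε x), h⟩ + Mop (R ε x) := hc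
    rw [eq_sub_iff_add_eq]; exact hc'.symm
  -- key identity on dom B₀
  have hkey : ∀ ε (hε : 0 < ε) (x : K) (hx : x ∈ D₀.domain ⊓ A.domain)
      (hm : R ε x ∈ A.domain),
      A ⟨R ε x, hm⟩ = R ε (B0 D₀ A Mc N hMdom ⟨x, hx⟩)
        + (R ε (Mop (R ε x)) - R ε (N x) - ε⁻¹ • (Mc x - Mc (R ε x))) := by
    intro ε hε x hx hm
    have hAR : R ε (A ⟨x, (Submodule.mem_inf.mp hx).2⟩) = A ⟨R ε x, hm⟩ :=
      (hARcomm ε hε ⟨x, (Submodule.mem_inf.mp hx).2⟩).symm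
    rw [hB0app x hx, map_add, map_add, hAR,
      hRD ε hε ⟨Mc x, hMdom x (Submodule.mem_inf.mp hx).1⟩]
    have hcoe : ((⟨Mc x, hMdom x (Submodule.mem_inf.mp hx).1⟩ : D₀.domain) : K) = Mc x := rfl
    rw [hcoe, hMcR ε hε x]
    have hexp : ε⁻¹ • (Mc x - (Mc (R ε x) + ε • R ε (Mop (R ε x))))
        = ε⁻¹ • (Mc x - Mc (R ε x)) - R ε (Mop (R ε x)) := by
      rw [← sub_sub, smul_sub, hsm' ε hε]
    rw [hexp]; abel
  -- membership and value for A on R ε u, u ∈ dom (closure B₀)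
  have hAmem : ∀ ε (hε : 0 < ε) (u : (B0 D₀ A Mc N hMdom).closure.domain),
      ∃ hm : R ε (u : K) ∈ A.domain,
        A ⟨R ε (u : K), hm⟩ = R ε ((B0 D₀ A Mc N hMdom).closure u)
          + (R ε (Mop (R ε (u : K))) - R ε (N (u : K))
              - ε⁻¹ • (Mc (u : K) - Mc (R ε (u : K)))) := by
    intro ε hε u
    have hgr : ((u : K), (B0 D₀ A Mc N hMdom).closure u)
        ∈ closure ((B0 D₀ A Mc N hMdom).graph : Set (K × K)) := by
      have h1 := (B0 D₀ A Mc N hMdom).closure.mem_graph u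
      rw [← hclosable.graph_closure_eq_closure_graph] at h1
      exact h1
    obtain ⟨p, hp, hlim⟩ := mem_closure_iff_seq_limit.mp hgr
    set Φ : K → K := fun x => R ε (Mop (R ε x)) - R ε (N x)
        - ε⁻¹ • (Mc x - Mc (R ε x)) with hΦ
    have hΦc : Continuous Φ := by
      apply Continuous.sub
      · exact ((R ε).continuous.comp (Mop.continuous.comp (R ε).continuous)).sub
          ((R ε).continuous.comp N.continuous)
      · exact (continuous_const_smul _).comp
          (Mc.continuous.sub (Mc.continuous.comp (R ε).continuous))
    set F : K × K → K × K := fun q => (R ε q.1, R ε q.2 + Φ q.1) with hF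
    have hFc : Continuous F := by
      refine Continuous.prodMk ((R ε).continuous.comp continuous_fst) ?_
      exact ((R ε).continuous.comp continuous_snd).add (hΦc.comp continuous_fst)
    have hmemA : ∀ n, F (p n) ∈ A.graph := by
      intro n
      obtain ⟨y, hy1, hy2⟩ := (B0 D₀ A Mc N hMdom).mem_graph_iff.mp (hp n)
      refine A.mem_graph_iff.mpr
        ⟨⟨R ε ((y : K)), hARdom ε hε (y : K) (Submodule.mem_inf.mp y.2).2⟩, ?_, ?_⟩
      · show R ε ((y : K)) = R ε ((p n).1)
        rw [← hy1]
      · have hk := hkey ε hε (y : K) y.2 (hARdom ε hε (y : K) (Submodule.mem_inf.mp y.2).2)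
        show A _ = R ε ((p n).2) + Φ ((p n).1)
        rw [← hy1, ← hy2]
        exact hk
    have hlim2 : Tendsto (fun n => F (p n)) atTop
        (nhds (F ((u : K), (B0 D₀ A Mc N hMdom).closure u))) :=
      (hFc.tendsto _).comp hlim
    have hFin : F ((u : K), (B0 D₀ A Mc N hMdom).closure u) ∈ A.graph :=
      hAclosed.mem_of_tendsto hlim2 (Eventually.of_forall hmemA)
    obtain ⟨a, ha1, ha2⟩ := A.mem_graph_iff.mp hFin
    have h1 : (a : K) = R ε (u : K) := ha1
    have h2 : A a = R ε ((B0 D₀ A Mc N hMdom).closure u) + Φ (u : K) := ha2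
    refine ⟨h1 ▸ a.2, ?_⟩
    have h3 : a = ⟨R ε (u : K), h1 ▸ a.2⟩ := Subtype.ext h1
    rw [← h3, h2]
  have hmem : ∀ (ε : ℝ), 0 < ε → ∀ u : (B0 D₀ A Mc N hMdom).closure.domain,
      R ε (u : K) ∈ D₀.domain ⊓ A.domain := fun ε hε u =>
    Submodule.mem_inf.mpr ⟨hRdom ε hε (u : K), (hAmem ε hε u).choose⟩
  -- complex-scalar smul reduction
  have hCsm : ∀ ε (hε : 0 < ε) (y : K) (h : R ε y ∈ D₀.domain),
      (ε : ℂ) • D₀ ⟨R ε y, h⟩ = y - R ε y := by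
    intro ε hε y h
    rw [hval ε hε y h, Complex.coe_smul, hsm ε hε]
  -- the main identity
  have hmain : ∀ (ε : ℝ) (hε : 0 < ε) (u : (B0 D₀ A Mc N hMdom).closure.domain),
      R ε ((B0 D₀ A Mc N hMdom).closure u)
        = B0 D₀ A Mc N hMdom ⟨R ε (u : K), hmem ε hε u⟩
          + (ε : ℂ) • D₀ ⟨R ε (Mop (R ε (u : K))), hRdom ε hε _⟩
          + (R ε (N (u : K)) - N (R ε (u : K))) := by
    intro ε hε u
    obtain ⟨hm, hAv⟩ := hAmem ε hε u
    have hAeq : A ⟨R ε (u : K), (Submodule.mem_inf.mp (hmem ε hε u)).2⟩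
        = A ⟨R ε (u : K), hm⟩ := rfl
    rw [hB0app _ (hmem ε hε u), hAeq, hAv,
      hDMc ε hε (u : K) (hMdom _ (Submodule.mem_inf.mp (hmem ε hε u)).1),
      hCsm ε hε (Mop (R ε (u : K))) (hRdom ε hε _)]
    abel
  -- convergence helper
  have hconv1 : ∀ (C : K →L[ℂ] K) (x : K),
      Tendsto (fun ε => R ε (C (R ε x))) (nhdsWithin 0 (Set.Ioi 0)) (nhds (C x)) := by
    intro C x
    rw [tendsto_iff_norm_sub_tendsto_zero]
    have h1 : Tendsto (fun ε => ‖C (R ε x) - C x‖) (nhdsWithin 0 (Set.Ioi 0)) (nhds 0) :=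
      tendsto_iff_norm_sub_tendsto_zero.mp ((C.continuous.tendsto x).comp (hRtendsto x))
    have h2 : Tendsto (fun ε => ‖R ε (C x) - C x‖) (nhdsWithin 0 (Set.Ioi 0)) (nhds 0) :=
      tendsto_iff_norm_sub_tendsto_zero.mp (hRtendsto (C x))
    have hb : Tendsto (fun ε => ‖C (R ε x) - C x‖ + ‖R ε (C x) - C x‖)
        (nhdsWithin 0 (Set.Ioi 0)) (nhds 0) := by simpa using h1.add h2
    refine squeeze_zero' (Eventually.of_forall fun ε => norm_nonneg _) ?_ hb
    filter_upwards [self_mem_nhdsWithin] with ε hε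
    have hε' : (0 : ℝ) < ε := hε
    calc ‖R ε (C (R ε x)) - C x‖
        ≤ ‖R ε (C (R ε x)) - R ε (C x)‖ + ‖R ε (C x) - C x‖ :=
          norm_sub_le_norm_sub_add_norm_sub _ _ _
      _ ≤ ‖C (R ε x) - C x‖ + ‖R ε (C x) - C x‖ := by
          have : ‖R ε (C (R ε x)) - R ε (C x)‖ ≤ ‖C (R ε x) - C x‖ := by
            rw [← map_sub]
            simpa using (R ε).le_of_opNorm_le (hRnorm ε hε') (C (R ε x) - C x)
          gcongr
  refine ⟨hmem, hmain, ?_, ?_⟩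
  · -- weak convergence of the middle term to 0
    intro u w
    have hstrong : Tendsto (fun ε => Mop (R ε (u : K)) - R ε (Mop (R ε (u : K))))
        (nhdsWithin 0 (Set.Ioi 0)) (nhds 0) := by
      have := ((Mop.continuous.tendsto _).comp (hRtendsto (u : K))).sub (hconv1 Mop (u : K))
      simpa using this
    have hinner : Tendsto (fun ε : ℝ =>
        (inner ℂ (Mop (R ε (u : K)) - R ε (Mop (R ε (u : K)))) w : ℂ))
        (nhdsWithin 0 (Set.Ioi 0)) (nhds 0) := by
      have := Filter.Tendsto.inner (𝕜 := ℂ) hstrong (tendsto_const_nhds (x := w))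
      simpa [inner_sub_left] using this
    refine Tendsto.congr' ?_ hinner
    filter_upwards [self_mem_nhdsWithin] with ε hε
    have hε' : (0 : ℝ) < ε := hε
    rw [dif_pos hε', hCsm ε hε' (Mop (R ε (u : K))) (hRdom ε hε' _)]
  · -- weak convergence of B₀ (R ε u) to B u
    intro u w
    have hstrong : Tendsto (fun ε => R ε ((B0 D₀ A Mc N hMdom).closure u)
        - (Mop (R ε (u : K)) - R ε (Mop (R ε (u : K))))
        - (R ε (N (u : K)) - N (R ε (u : K))))
        (nhdsWithin 0 (Set.Ioi 0)) (nhds ((B0 D₀ A Mc N hMdom).closure u)) := by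
      have t1 := hRtendsto ((B0 D₀ A Mc N hMdom).closure u)
      have t2 : Tendsto (fun ε => Mop (R ε (u : K)) - R ε (Mop (R ε (u : K))))
          (nhdsWithin 0 (Set.Ioi 0)) (nhds 0) := by
        have := ((Mop.continuous.tendsto _).comp (hRtendsto (u : K))).sub (hconv1 Mop (u : K))
        simpa using this
      have t3 : Tendsto (fun ε => R ε (N (u : K)) - N (R ε (u : K)))
          (nhdsWithin 0 (Set.Ioi 0)) (nhds 0) := by
        have := (hRtendsto (N (u : K))).sub ((N.continuous.tendsto _).comp (hRtendsto (u : K)))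
        simpa using this
      have := (t1.sub t2).sub t3
      simpa using this
    have hinner := Filter.Tendsto.inner (𝕜 := ℂ) hstrong (tendsto_const_nhds (x := w))
    refine Tendsto.congr' ?_ hinner
    filter_upwards [self_mem_nhdsWithin] with ε hε
    have hε' : (0 : ℝ) < ε := hε
    rw [dif_pos hε']
    congr 1
    have h := hmain ε hε' u
    rw [hCsm ε hε' (Mop (R ε (u : K))) (hRdom ε hε' _)] at h
    rw [h]; abel
end
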